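/- arXiv:0801.0941 — 3 statements merged into one kernel-verified Lean document; each statement's English description precedes it below -/
import Mathlib

section
/- For d = 1, the triangle function f(x) = max(1 − |x|, 0) is an extremal ray generator of the cone of continuous nonnegative positive definite functions on ℝ. -/
open Complex
open scoped ComplexOrder

/-- A real-valued function on ℝ is positive definite in Bochner's sense. -/
def IsPosDef (f : ℝ → ℝ) : Prop :=
  ∀ (n : ℕ) (x : Fin n → ℝ) (c : Fin n → ℂ),
    0 ≤ ∑ j, ∑ k, c j * (starRingEnd ℂ) (c k) * (f (x j - x k) : ℂ)

namespace TriExt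
open Finset

lemma posdef_even {p : ℝ → ℝ} (hp : IsPosDef p) (x : ℝ) : p (-x) = p x := by
  have h := hp 2 ![0, x] ![1, I]
  rw [Complex.le_def] at h
  have him := h.2.symm
  simp [Fin.sum_univ_two, Complex.ext_iff, Complex.add_im, Complex.mul_im] at him
  linarith [him]

lemma posdef_re {p : ℝ → ℝ} (hp : IsPosDef p) (N : ℕ) (x t : Fin N → ℝ) :
    0 ≤ ∑ j, ∑ k, Real.cos (t j - t k) * p (x j - x k) := by
  have h := hp N x (fun j => Complex.exp (t j * I))
  rw [Complex.le_def] at h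
  have hre := h.1
  simp only [Complex.zero_re] at hre
  refine le_of_le_of_eq hre ?_
  rw [Complex.re_sum]
  refine Finset.sum_congr rfl fun j _ => ?_
  rw [Complex.re_sum]
  refine Finset.sum_congr rfl fun k _ => ?_
  rw [← Complex.exp_conj]
  have : (starRingEnd ℂ) ((t k : ℂ) * I) = -((t k : ℂ) * I) := by
    simp [Complex.conj_I]
  rw [this, ← Complex.exp_add]
  have : (t j : ℂ) * I + -((t k : ℂ) * I) = ((t j - t k : ℝ) : ℂ) * I := by
    push_cast; ring
  rw [this, Complex.mul_re, Complex.ofReal_re, Complex.ofReal_im,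
    Complex.exp_ofReal_mul_I_re]
  ring

lemma sq_sum_succ (φ : ℤ → ℝ) (hφ : ∀ m, φ (-m) = φ m) (N : ℕ) :
    ∑ j ∈ range (N+1), ∑ k ∈ range (N+1), φ ((j:ℤ) - k)
      = (∑ j ∈ range N, ∑ k ∈ range N, φ ((j:ℤ) - k)) + φ 0
        + 2 * ∑ j ∈ range N, φ ((j:ℤ) + 1) := by
  rw [Finset.sum_range_succ]
  simp only [Finset.sum_range_succ]
  rw [Finset.sum_add_distrib]
  have h1 : ∑ j ∈ range N, φ ((j:ℤ) - N) = ∑ j ∈ range N, φ ((j:ℤ) + 1) := by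
    rw [← Finset.sum_range_reflect (fun j => φ ((j:ℤ) + 1)) N]
    refine Finset.sum_congr rfl fun j hj => ?_
    rw [Finset.mem_range] at hj
    rw [← hφ]
    congr 1
    push_cast [Nat.cast_sub (by omega : j + 1 ≤ N)]
    omega
  have h2 : ∑ k ∈ range N, φ ((N:ℤ) - k) = ∑ j ∈ range N, φ ((j:ℤ) + 1) := by
    rw [← Finset.sum_range_reflect (fun j => φ ((j:ℤ) + 1)) N]
    refine Finset.sum_congr rfl fun j hj => ?_
    rw [Finset.mem_range] at hj
    congr 1
    push_cast [Nat.cast_sub (by omega : j + 1 ≤ N)]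
    omega
  rw [h1, h2]
  simp
  ring

lemma sum_exp_root (n : ℕ) (hn : 0 < n) (r : ℤ) :
    ∑ j ∈ range n, Complex.exp (((2 * Real.pi * r * j / n : ℝ) : ℂ) * I)
      = if (n:ℤ) ∣ r then (n:ℂ) else 0 := by
  have hterm : ∀ j : ℕ, Complex.exp (((2 * Real.pi * r * j / n : ℝ) : ℂ) * I)
      = Complex.exp (((2 * Real.pi * r / n : ℝ) : ℂ) * I) ^ j := by
    intro j
    rw [← Complex.exp_nat_mul]
    congr 1
    push_cast
    ring
  simp only [hterm]
  by_cases hd : (n:ℤ) ∣ r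
  · obtain ⟨m, hm⟩ := hd
    have hω : Complex.exp (((2 * Real.pi * r / n : ℝ) : ℂ) * I) = 1 := by
      have hn' : (n:ℂ) ≠ 0 := Nat.cast_ne_zero.mpr hn.ne'
      have : ((2 * Real.pi * r / n : ℝ) : ℂ) * I = (m : ℤ) * (2 * Real.pi * I) := by
        push_cast [hm]
        field_simp
      rw [this, Complex.exp_int_mul_two_pi_mul_I]
    rw [if_pos ⟨m, hm⟩]
    rw [show ((2 * Real.pi * (r:ℝ) / (n:ℝ) : ℝ):ℂ) = 2 * (Real.pi:ℂ) * (r:ℂ) / (n:ℂ) by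
      push_cast; ring] at hω
    simp [hω]
  · have hω : Complex.exp (((2 * Real.pi * r / n : ℝ) : ℂ) * I) ≠ 1 := by
      intro hone
      rw [Complex.exp_eq_one_iff] at hone
      obtain ⟨m, hm⟩ := hone
      have hI : ((2 * Real.pi * r / n : ℝ) : ℂ) = (m:ℂ) * (2 * Real.pi) := by
        have := hm
        have hI2 : ((2 * Real.pi * r / n : ℝ) : ℂ) * I = ((m:ℂ) * (2 * Real.pi)) * I := by
          rw [hm]; ring
        exact mul_right_cancel₀ Complex.I_ne_zero hI2
      have hre : (2 * Real.pi * r / n : ℝ) = m * (2 * Real.pi) := by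
        exact_mod_cast hI
      have hn' : (n:ℝ) ≠ 0 := Nat.cast_ne_zero.mpr hn.ne'
      have : (r:ℝ) = (m:ℝ) * n := by
        field_simp at hre
        nlinarith [Real.pi_ne_zero, Real.pi_pos]
      have : r = m * n := by exact_mod_cast this
      exact hd ⟨m, by rw [this]; ring⟩
    rw [geom_sum_eq hω]
    have hωn : Complex.exp (((2 * Real.pi * r / n : ℝ) : ℂ) * I) ^ n = 1 := by
      rw [← Complex.exp_nat_mul]
      have hn' : (n:ℂ) ≠ 0 := Nat.cast_ne_zero.mpr hn.ne'
      have : (n:ℂ) * (((2 * Real.pi * r / n : ℝ) : ℂ) * I) = (r:ℤ) * (2 * Real.pi * I) := by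
        push_cast
        field_simp
      rw [this, Complex.exp_int_mul_two_pi_mul_I]
    rw [hωn]
    simp [hd]

lemma sum_cos_root (n : ℕ) (hn : 0 < n) (r : ℤ) :
    ∑ j ∈ range n, Real.cos (2 * Real.pi * r * j / n)
      = if (n:ℤ) ∣ r then (n:ℝ) else 0 := by
  have h := sum_exp_root n hn r
  have hre := congrArg Complex.re h
  rw [Complex.re_sum] at hre
  simp only [Complex.exp_ofReal_mul_I_re] at hre
  convert hre using 1
  split <;> simp

lemma sum_sin_root (n : ℕ) (hn : 0 < n) (r : ℤ) :
    ∑ j ∈ range n, Real.sin (2 * Real.pi * r * j / n) = 0 := by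
  have h := sum_exp_root n hn r
  have him := congrArg Complex.im h
  rw [Complex.im_sum] at him
  simp only [Complex.exp_ofReal_mul_I_im] at him
  convert him using 1
  split <;> simp

-- product to sum
lemma cos_mul_cos (A B : ℝ) :
    Real.cos A * Real.cos B = (Real.cos (A - B) + Real.cos (A + B)) / 2 := by
  rw [Real.cos_sub, Real.cos_add]; ring

lemma sin_mul_sin (A B : ℝ) :
    Real.sin A * Real.sin B = (Real.cos (A - B) - Real.cos (A + B)) / 2 := by
  rw [Real.cos_sub, Real.cos_add]; ring

-- sum over k of cos(2π a k/n) cos(2π b k/n)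
lemma sum_cos_mul_cos (n : ℕ) (hn : 0 < n) (a b : ℤ)
    (h : ∀ (r : ℤ), ∑ j ∈ range n, Real.cos (2 * Real.pi * r * j / n)
        = if (n:ℤ) ∣ r then (n:ℝ) else 0) :
    ∑ k ∈ range n, Real.cos (2 * Real.pi * a * k / n) * Real.cos (2 * Real.pi * b * k / n)
      = ((if (n:ℤ) ∣ (a - b) then (n:ℝ) else 0) + (if (n:ℤ) ∣ (a + b) then (n:ℝ) else 0)) / 2 := by
  have step : ∀ k ∈ range n,
      Real.cos (2 * Real.pi * a * k / n) * Real.cos (2 * Real.pi * b * k / n)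
        = (Real.cos (2 * Real.pi * (a - b) * k / n) + Real.cos (2 * Real.pi * (a + b) * k / n)) / 2 := by
    intro k _
    rw [cos_mul_cos]
    congr 2 <;> [skip; skip]
    · congr 1; push_cast; ring
    · congr 1; push_cast; ring
  rw [Finset.sum_congr rfl step, ← Finset.sum_div, Finset.sum_add_distrib]
  simp only [← Int.cast_sub, ← Int.cast_add]
  rw [h (a-b), h (a+b)]

lemma sum_sin_mul_sin (n : ℕ) (hn : 0 < n) (a b : ℤ)
    (h : ∀ (r : ℤ), ∑ j ∈ range n, Real.cos (2 * Real.pi * r * j / n)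
        = if (n:ℤ) ∣ r then (n:ℝ) else 0) :
    ∑ k ∈ range n, Real.sin (2 * Real.pi * a * k / n) * Real.sin (2 * Real.pi * b * k / n)
      = ((if (n:ℤ) ∣ (a - b) then (n:ℝ) else 0) - (if (n:ℤ) ∣ (a + b) then (n:ℝ) else 0)) / 2 := by
  have step : ∀ k ∈ range n,
      Real.sin (2 * Real.pi * a * k / n) * Real.sin (2 * Real.pi * b * k / n)
        = (Real.cos (2 * Real.pi * (a - b) * k / n) - Real.cos (2 * Real.pi * (a + b) * k / n)) / 2 := by
    intro k _
    rw [sin_mul_sin]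
    congr 2
    · congr 1; push_cast; ring
    · congr 1; push_cast; ring
  rw [Finset.sum_congr rfl step, ← Finset.sum_div, Finset.sum_sub_distrib]
  simp only [← Int.cast_sub, ← Int.cast_add]
  rw [h (a-b), h (a+b)]

noncomputable def Ssum (p : ℝ → ℝ) (n : ℕ) (θ : ℝ) : ℝ :=
  p 0 + 2 * ∑ j ∈ Finset.range (n-1), p (((j:ℝ)+1)/n) * Real.cos (((j:ℝ)+1)*θ)

noncomputable def Dsum (p : ℝ → ℝ) (n : ℕ) (θ : ℝ) : ℝ :=
  ∑ j ∈ Finset.range (n-1), ((j:ℝ)+1) * p (((j:ℝ)+1)/n) * Real.sin (((j:ℝ)+1)*θ)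

noncomputable def tri (x : ℝ) : ℝ := max (1 - |x|) 0

lemma Ssum_nonneg (p : ℝ → ℝ) (n : ℕ) (hn : 0 < n) (θ : ℝ)
    (heven : ∀ x, p (-x) = p x)
    (hpos : ∀ (N : ℕ) (x t : Fin N → ℝ),
      0 ≤ ∑ j, ∑ k, Real.cos (t j - t k) * p (x j - x k))
    (hvan : ∀ m : ℕ, n ≤ m → p ((m:ℝ)/n) = 0) :
    0 ≤ Ssum p n θ := by
  set φ : ℤ → ℝ := fun m => Real.cos ((m:ℝ)*θ) * p ((m:ℝ)/n) with hφdef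
  have hφeven : ∀ m, φ (-m) = φ m := by
    intro m
    simp only [hφdef, Int.cast_neg]
    rw [neg_mul, Real.cos_neg, neg_div, heven]
  set Q : ℕ → ℝ := fun N => ∑ j ∈ range N, ∑ k ∈ range N, φ ((j:ℤ) - k) with hQdef
  have hQpos : ∀ N, 0 ≤ Q N := by
    intro N
    have h := hpos N (fun i => (i:ℝ)/n) (fun i => (i:ℝ)*θ)
    refine le_of_le_of_eq h ?_
    rw [Fin.sum_univ_eq_sum_range (fun j => ∑ k : Fin N, Real.cos ((j:ℝ)*θ - (k:ℝ)*θ) * p ((j:ℝ)/n - (k:ℝ)/n)) N]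
    refine Finset.sum_congr rfl fun j _ => ?_
    rw [Fin.sum_univ_eq_sum_range (fun k => Real.cos ((j:ℝ)*θ - (k:ℝ)*θ) * p ((j:ℝ)/n - (k:ℝ)/n)) N]
    refine Finset.sum_congr rfl fun k _ => ?_
    simp only [hφdef]
    have h1 : ((((j:ℤ) - k : ℤ)):ℝ) = (j:ℝ) - k := by push_cast; ring
    rw [h1]
    congr 1
    · congr 1; ring
    · congr 1; ring
  have hφ0 : φ 0 = p 0 := by simp [hφdef]
  have hS : Ssum p n θ = φ 0 + 2 * ∑ j ∈ range (n-1), φ ((j:ℤ) + 1) := by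
    rw [hφ0, Ssum]
    congr 1
    congr 1
    refine Finset.sum_congr rfl fun j _ => ?_
    simp only [hφdef]
    have h1 : (((j:ℤ) + 1 : ℤ):ℝ) = (j:ℝ) + 1 := by push_cast; ring
    rw [h1, mul_comm]
  have hstep : ∀ N, n - 1 ≤ N → Q (N+1) = Q N + Ssum p n θ := by
    intro N hN
    rw [hQdef]
    simp only
    rw [sq_sum_succ φ hφeven N]
    have htail : ∑ j ∈ range N, φ ((j:ℤ) + 1) = ∑ j ∈ range (n-1), φ ((j:ℤ) + 1) := by
      refine (Finset.sum_subset (Finset.range_subset_range.mpr hN) ?_).symm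
      intro j hj hj'
      rw [Finset.mem_range] at hj hj'
      simp only [hφdef]
      have h1 : (((j:ℤ) + 1 : ℤ):ℝ) = (((j+1 : ℕ)):ℝ) := by push_cast; ring
      rw [h1, hvan (j+1) (by omega)]
      ring
    rw [htail, hS]
    ring
  have hiter : ∀ M : ℕ, Q (n - 1 + M) = Q (n-1) + M * Ssum p n θ := by
    intro M
    induction M with
    | zero => simp
    | succ M ih =>
      have : n - 1 + (M + 1) = (n - 1 + M) + 1 := by omega
      rw [this, hstep (n - 1 + M) (by omega), ih]
      push_cast
      ring
  by_contra hneg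
  push_neg at hneg
  obtain ⟨M, hM⟩ := exists_nat_gt (Q (n-1) / (- Ssum p n θ))
  have h1 : 0 < - Ssum p n θ := by linarith
  have h2 : Q (n-1) < M * (- Ssum p n θ) := by
    rwa [div_lt_iff₀ h1] at hM
  have := hQpos (n - 1 + M)
  rw [hiter M] at this
  nlinarith

-- closed form for the pure cosine double sum
lemma cos_double_sum (θ : ℝ) (N : ℕ) :
    ∑ j ∈ range N, ∑ k ∈ range N, Real.cos (((j:ℤ) - k : ℤ) * θ)
      = (N:ℝ) + 2 * ∑ j ∈ range N, ((N:ℝ) - ((j:ℝ)+1)) * Real.cos (((j:ℝ)+1)*θ) := by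
  induction N with
  | zero => simp
  | succ N ih =>
    have hrec := sq_sum_succ (fun m => Real.cos ((m:ℝ) * θ))
      (by intro m; simp only [Int.cast_neg]; rw [neg_mul, Real.cos_neg]) N
    push_cast at hrec ih ⊢
    rw [hrec, ih, Finset.sum_range_succ]
    push_cast
    have : ((N:ℝ) + 1 - ((N:ℝ)+1)) * Real.cos (((N:ℝ)+1)*θ) = 0 := by ring
    rw [this]
    have e1 : ∑ j ∈ range N, ((N:ℝ) + 1 - ((j:ℝ)+1)) * Real.cos (((j:ℝ)+1)*θ)
        = ∑ j ∈ range N, ((N:ℝ) - ((j:ℝ)+1)) * Real.cos (((j:ℝ)+1)*θ)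
          + ∑ j ∈ range N, Real.cos (((j:ℝ)+1)*θ) := by
      rw [← Finset.sum_add_distrib]
      exact Finset.sum_congr rfl fun j _ => by ring
    rw [e1, zero_mul, Real.cos_zero]
    ring

-- square form
lemma cos_double_sum_sq (θ : ℝ) (N : ℕ) :
    ∑ j ∈ range N, ∑ k ∈ range N, Real.cos (((j:ℤ) - k : ℤ) * θ)
      = (∑ j ∈ range N, Real.cos (j * θ))^2 + (∑ j ∈ range N, Real.sin (j * θ))^2 := by
  have expand : ∀ j ∈ range N, ∀ k ∈ range N, Real.cos (((j:ℤ) - k : ℤ) * θ)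
      = Real.cos (j*θ) * Real.cos (k*θ) + Real.sin (j*θ) * Real.sin (k*θ) := by
    intro j _ k _
    rw [← Real.cos_sub]
    congr 1
    push_cast
    ring
  calc ∑ j ∈ range N, ∑ k ∈ range N, Real.cos (((j:ℤ) - k : ℤ) * θ)
      = ∑ j ∈ range N, ∑ k ∈ range N,
          (Real.cos (j*θ) * Real.cos (k*θ) + Real.sin (j*θ) * Real.sin (k*θ)) := by
        refine Finset.sum_congr rfl fun j hj => Finset.sum_congr rfl fun k hk => ?_
        exact expand j hj k hk
    _ = (∑ j ∈ range N, Real.cos (j * θ))^2 + (∑ j ∈ range N, Real.sin (j * θ))^2 := by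
        simp only [Finset.sum_add_distrib, ← Finset.sum_mul, ← Finset.mul_sum]
        rw [sq, sq]

lemma hasDerivAt_Ssum (p : ℝ → ℝ) (n : ℕ) (θ : ℝ) :
    HasDerivAt (Ssum p n) (-2 * Dsum p n θ) θ := by
  have hterm : ∀ j ∈ Finset.range (n-1),
      HasDerivAt (fun t => p (((j:ℝ)+1)/n) * Real.cos (((j:ℝ)+1)*t))
        (p (((j:ℝ)+1)/n) * (-Real.sin (((j:ℝ)+1)*θ) * ((j:ℝ)+1))) θ := by
    intro j _
    have h1 : HasDerivAt (fun t : ℝ => ((j:ℝ)+1)*t) ((j:ℝ)+1) θ := by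
      simpa using (hasDerivAt_id θ).const_mul ((j:ℝ)+1)
    have h2 := (Real.hasDerivAt_cos (((j:ℝ)+1)*θ)).comp θ h1
    exact h2.const_mul _
  have hsum := (HasDerivAt.sum hterm).const_mul (2:ℝ)
  have hfull := hsum.const_add (p 0)
  have heq : p 0 + 2 * ∑ j ∈ Finset.range (n-1),
      (fun t => p (((j:ℝ)+1)/n) * Real.cos (((j:ℝ)+1)*t)) θ = Ssum p n θ := rfl
  have hval : 2 * ∑ j ∈ Finset.range (n-1),
      p (((j:ℝ)+1)/n) * (-Real.sin (((j:ℝ)+1)*θ) * ((j:ℝ)+1)) = -2 * Dsum p n θ := by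
    rw [Dsum, Finset.mul_sum, neg_mul, Finset.mul_sum, ← Finset.sum_neg_distrib]
    exact Finset.sum_congr rfl fun j _ => by ring
  rw [← hval]
  refine hfull.congr_of_eventuallyEq (Filter.Eventually.of_forall fun t => ?_)
  simp only [Ssum, Finset.sum_apply]

lemma Dsum_zero_at_min (p : ℝ → ℝ) (n : ℕ) (θ : ℝ)
    (hmin : ∀ t, 0 ≤ Ssum p n t) (hzero : Ssum p n θ = 0) :
    Dsum p n θ = 0 := by
  have hloc : IsLocalMin (Ssum p n) θ := by
    apply Filter.Eventually.of_forall
    intro t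
    rw [hzero]
    exact hmin t
  have := hloc.hasDerivAt_eq_zero (hasDerivAt_Ssum p n θ)
  linarith

lemma tri_eval (x : ℝ) (h0 : 0 ≤ x) (h1 : x ≤ 1) : tri x = 1 - x := by
  rw [tri, _root_.abs_of_nonneg h0, max_eq_left (by linarith)]

lemma tri_zero : tri 0 = 1 := by rw [tri_eval 0 le_rfl zero_le_one]; ring

/-- value of the triangle symbol: n * Ssum tri n θ = n + 2 Σ_{j<n} (n-(j+1)) cos((j+1)θ) -/
lemma Ssum_tri (n : ℕ) (hn : 0 < n) (θ : ℝ) :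
    (n:ℝ) * Ssum tri n θ
      = (n:ℝ) + 2 * ∑ j ∈ range n, ((n:ℝ) - ((j:ℝ)+1)) * Real.cos (((j:ℝ)+1)*θ) := by
  have hcast : ((n:ℝ)) - (((n-1:ℕ):ℝ) + 1) = 0 := by
    have : (1:ℕ) ≤ n := hn
    push_cast [Nat.cast_sub this]
    ring
  have hsplit : ∑ j ∈ range n, ((n:ℝ) - ((j:ℝ)+1)) * Real.cos (((j:ℝ)+1)*θ)
      = ∑ j ∈ range (n-1), ((n:ℝ) - ((j:ℝ)+1)) * Real.cos (((j:ℝ)+1)*θ) := by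
    have hn' : n = (n-1) + 1 := by omega
    rw [hn', Finset.sum_range_succ]
    rw [← hn']
    rw [hcast, zero_mul, add_zero]
  rw [hsplit, Ssum, tri_zero]
  rw [Finset.mul_sum, mul_add, Finset.mul_sum, Finset.mul_sum]
  have : ∀ j ∈ range (n-1),
      (n:ℝ) * (2 * (tri (((j:ℝ)+1)/n) * Real.cos (((j:ℝ)+1)*θ)))
        = 2 * (((n:ℝ) - ((j:ℝ)+1)) * Real.cos (((j:ℝ)+1)*θ)) := by
    intro j hj
    rw [Finset.mem_range] at hj
    have hn0 : (0:ℝ) < n := by exact_mod_cast hn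
    have hj1 : (0:ℝ) ≤ ((j:ℝ)+1)/n := by positivity
    have hj2 : ((j:ℝ)+1)/n ≤ 1 := by
      rw [div_le_one hn0]
      have hj' : j + 1 ≤ n := by omega
      exact_mod_cast hj'
    rw [tri_eval _ hj1 hj2]
    field_simp
  rw [mul_one, Finset.sum_congr rfl this]


/-- The triangle symbol vanishes at θ = 2πk/n for 1 ≤ k ≤ n-1 -/
lemma Ssum_tri_zero (n : ℕ) (hn : 0 < n) (k : ℕ) (hk1 : 1 ≤ k) (hk2 : k < n) :
    Ssum tri n (2 * Real.pi * k / n) = 0 := by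
  set θ : ℝ := 2 * Real.pi * k / n with hθ
  have hc : ∑ j ∈ range n, Real.cos (j * θ) = 0 := by
    have h := sum_cos_root n hn (k:ℤ)
    have hnd : ¬ ((n:ℤ) ∣ (k:ℤ)) := by
      rw [Int.natCast_dvd_natCast]
      intro hdvd
      exact absurd (Nat.le_of_dvd (by omega) hdvd) (by omega)
    rw [if_neg hnd] at h
    rw [← h]
    refine Finset.sum_congr rfl fun j _ => ?_
    rw [hθ]
    congr 1
    push_cast
    ring
  have hs : ∑ j ∈ range n, Real.sin (j * θ) = 0 := by
    have h := sum_sin_root n hn (k:ℤ)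
    rw [← h]
    refine Finset.sum_congr rfl fun j _ => ?_
    rw [hθ]
    congr 1
    push_cast
    ring
  have hsq := cos_double_sum_sq θ n
  have hcf := cos_double_sum θ n
  rw [hc, hs] at hsq
  have hzero : (n:ℝ) + 2 * ∑ j ∈ range n, ((n:ℝ) - ((j:ℝ)+1)) * Real.cos (((j:ℝ)+1)*θ) = 0 := by
    rw [← hcf, hsq]; ring
  have := Ssum_tri n hn θ
  rw [hzero] at this
  have hn0 : (n:ℝ) ≠ 0 := by positivity
  exact (mul_eq_zero.mp this).resolve_left hn0

/-- Inversion identity 1: summing the symbol over all k gives n * p 0 -/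
lemma inversion_R1 (p : ℝ → ℝ) (n : ℕ) (hn : 0 < n) :
    ∑ k ∈ range n, Ssum p n (2 * Real.pi * k / n) = (n:ℝ) * p 0 := by
  have expand : ∀ k ∈ range n, Ssum p n (2 * Real.pi * k / n)
      = p 0 + 2 * ∑ j ∈ range (n-1),
          p (((j:ℝ)+1)/n) * Real.cos (2 * Real.pi * ((j:ℝ)+1) * k / n) := by
    intro k _
    rw [Ssum]
    congr 1
    congr 1
    refine Finset.sum_congr rfl fun j _ => ?_
    congr 1
    congr 1
    push_cast
    ring
  rw [Finset.sum_congr rfl expand, Finset.sum_add_distrib, Finset.sum_const, Finset.card_range]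
  have h2 : ∑ k ∈ range n, 2 * ∑ j ∈ range (n-1),
      p (((j:ℝ)+1)/n) * Real.cos (2 * Real.pi * ((j:ℝ)+1) * k / n) = 0 := by
    rw [← Finset.mul_sum, Finset.sum_comm]
    have hin : ∀ j ∈ range (n-1), ∑ k ∈ range n,
        p (((j:ℝ)+1)/n) * Real.cos (2 * Real.pi * ((j:ℝ)+1) * k / n) = 0 := by
      intro j hj
      rw [Finset.mem_range] at hj
      rw [← Finset.mul_sum]
      have h := sum_cos_root n hn ((j:ℤ)+1)
      have hnd : ¬ ((n:ℤ) ∣ ((j:ℤ)+1)) := by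
        have hc : ((j:ℤ)+1) = ((j+1 : ℕ) : ℤ) := by push_cast; ring
        rw [hc, Int.natCast_dvd_natCast]
        intro hdvd
        exact absurd (Nat.le_of_dvd (by omega) hdvd) (by omega)
      rw [if_neg hnd] at h
      push_cast at h
      rw [h, mul_zero]
    rw [Finset.sum_congr rfl hin, Finset.sum_const, Finset.card_range, smul_zero, mul_zero]
  rw [h2, add_zero, nsmul_eq_mul]

lemma dvd_iff_sub (n m j : ℕ) (hm1 : 1 ≤ m) (hm2 : m < n) (hj : j < n - 1) :
    ((n:ℤ) ∣ ((j:ℤ) + 1 - (m:ℤ))) ↔ j = m - 1 := by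
  constructor
  · intro hd
    have := Int.eq_zero_of_dvd_of_natAbs_lt_natAbs hd (by omega)
    omega
  · intro hj'
    have : (j:ℤ) + 1 - (m:ℤ) = 0 := by omega
    rw [this]
    exact dvd_zero _

lemma dvd_iff_add (n m j : ℕ) (hm1 : 1 ≤ m) (hm2 : m < n) (hj : j < n - 1) :
    ((n:ℤ) ∣ ((j:ℤ) + 1 + (m:ℤ))) ↔ j = n - m - 1 := by
  constructor
  · intro hd
    have hd' : n ∣ (j + 1 + m) := by
      have : ((j:ℤ) + 1 + (m:ℤ)) = ((j + 1 + m : ℕ) : ℤ) := by push_cast; ring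
      rw [this, Int.natCast_dvd_natCast] at hd
      exact hd
    have := Nat.eq_of_dvd_of_lt_two_mul (by omega) hd' (by omega)
    omega
  · intro hj'
    have : (j:ℤ) + 1 + (m:ℤ) = (n:ℤ) := by omega
    rw [this]

lemma inversion_R2 (p : ℝ → ℝ) (n m : ℕ) (hn : 0 < n) (hm1 : 1 ≤ m) (hm2 : m < n) :
    ∑ k ∈ range n, Ssum p n (2 * Real.pi * k / n) * Real.cos (2 * Real.pi * m * k / n)
      = (n:ℝ) * (p ((m:ℝ)/n) + p (((n-m:ℕ):ℝ)/n)) := by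
  have e1 : ∀ k ∈ range n, Ssum p n (2 * Real.pi * k / n) * Real.cos (2 * Real.pi * m * k / n)
      = p 0 * Real.cos (2 * Real.pi * m * k / n)
        + ∑ j ∈ range (n-1), 2 * p (((j:ℝ)+1)/n)
            * (Real.cos (2 * Real.pi * ((j:ℝ)+1) * k / n) * Real.cos (2 * Real.pi * m * k / n)) := by
    intro k _
    rw [Ssum, add_mul, Finset.mul_sum, Finset.sum_mul]
    congr 1
    refine Finset.sum_congr rfl fun j _ => ?_
    rw [show ((j:ℝ)+1)*(2 * Real.pi * k / n) = 2 * Real.pi * ((j:ℝ)+1) * k / n by ring]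
    ring
  rw [Finset.sum_congr rfl e1, Finset.sum_add_distrib, Finset.sum_comm]
  have hW : ∑ k ∈ range n, p 0 * Real.cos (2 * Real.pi * m * k / n) = 0 := by
    rw [← Finset.mul_sum]
    have h := sum_cos_root n hn (m:ℤ)
    have hnd : ¬ ((n:ℤ) ∣ (m:ℤ)) := by
      rw [Int.natCast_dvd_natCast]
      intro hdvd
      exact absurd (Nat.le_of_dvd (by omega) hdvd) (by omega)
    rw [if_neg hnd] at h
    push_cast at h
    rw [h, mul_zero]
  rw [hW, zero_add]
  have e2 : ∀ j ∈ range (n-1),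
      ∑ k ∈ range n, 2 * p (((j:ℝ)+1)/n)
          * (Real.cos (2 * Real.pi * ((j:ℝ)+1) * k / n) * Real.cos (2 * Real.pi * m * k / n))
      = (if j = m - 1 then p (((j:ℝ)+1)/n) * n else 0)
        + (if j = n - m - 1 then p (((j:ℝ)+1)/n) * n else 0) := by
    intro j hj
    rw [Finset.mem_range] at hj
    rw [← Finset.mul_sum]
    have h := sum_cos_mul_cos n hn ((j:ℤ)+1) (m:ℤ) (sum_cos_root n hn)
    push_cast at h
    rw [h]
    simp only [dvd_iff_sub n m j hm1 hm2 hj, dvd_iff_add n m j hm1 hm2 hj]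
    split_ifs <;> ring
  rw [Finset.sum_congr rfl e2, Finset.sum_add_distrib,
      Finset.sum_ite_eq' (range (n-1)) (m-1) (fun j => p (((j:ℝ)+1)/n) * n),
      Finset.sum_ite_eq' (range (n-1)) (n-m-1) (fun j => p (((j:ℝ)+1)/n) * n)]
  rw [if_pos (Finset.mem_range.mpr (by omega)), if_pos (Finset.mem_range.mpr (by omega))]
  have c1 : ((m-1:ℕ):ℝ) + 1 = (m:ℝ) := by push_cast [Nat.cast_sub hm1]; ring
  have c2 : ((n-m-1:ℕ):ℝ) + 1 = ((n-m:ℕ):ℝ) := by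
    have : (1:ℕ) ≤ n - m := by omega
    push_cast [Nat.cast_sub this]
    ring
  rw [c1, c2]
  ring

lemma inversion_R3 (p : ℝ → ℝ) (n m : ℕ) (hn : 0 < n) (hm1 : 1 ≤ m) (hm2 : m < n) :
    ∑ k ∈ range n, Dsum p n (2 * Real.pi * k / n) * Real.sin (2 * Real.pi * m * k / n)
      = (n:ℝ) / 2 * ((m:ℝ) * p ((m:ℝ)/n) - ((n-m:ℕ):ℝ) * p (((n-m:ℕ):ℝ)/n)) := by
  have e1 : ∀ k ∈ range n, Dsum p n (2 * Real.pi * k / n) * Real.sin (2 * Real.pi * m * k / n)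
      = ∑ j ∈ range (n-1), ((j:ℝ)+1) * p (((j:ℝ)+1)/n)
            * (Real.sin (2 * Real.pi * ((j:ℝ)+1) * k / n) * Real.sin (2 * Real.pi * m * k / n)) := by
    intro k _
    rw [Dsum, Finset.sum_mul]
    refine Finset.sum_congr rfl fun j _ => ?_
    rw [show ((j:ℝ)+1)*(2 * Real.pi * k / n) = 2 * Real.pi * ((j:ℝ)+1) * k / n by ring]
    ring
  rw [Finset.sum_congr rfl e1, Finset.sum_comm]
  have e2 : ∀ j ∈ range (n-1),
      ∑ k ∈ range n, ((j:ℝ)+1) * p (((j:ℝ)+1)/n)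
          * (Real.sin (2 * Real.pi * ((j:ℝ)+1) * k / n) * Real.sin (2 * Real.pi * m * k / n))
      = (if j = m - 1 then ((j:ℝ)+1) * p (((j:ℝ)+1)/n) * n / 2 else 0)
        - (if j = n - m - 1 then ((j:ℝ)+1) * p (((j:ℝ)+1)/n) * n / 2 else 0) := by
    intro j hj
    rw [Finset.mem_range] at hj
    rw [← Finset.mul_sum]
    have h := sum_sin_mul_sin n hn ((j:ℤ)+1) (m:ℤ) (sum_cos_root n hn)
    push_cast at h
    rw [h]
    simp only [dvd_iff_sub n m j hm1 hm2 hj, dvd_iff_add n m j hm1 hm2 hj]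
    split_ifs <;> ring
  rw [Finset.sum_congr rfl e2, Finset.sum_sub_distrib,
      Finset.sum_ite_eq' (range (n-1)) (m-1) (fun j => ((j:ℝ)+1) * p (((j:ℝ)+1)/n) * n / 2),
      Finset.sum_ite_eq' (range (n-1)) (n-m-1) (fun j => ((j:ℝ)+1) * p (((j:ℝ)+1)/n) * n / 2)]
  rw [if_pos (Finset.mem_range.mpr (by omega)), if_pos (Finset.mem_range.mpr (by omega))]
  have c1 : ((m-1:ℕ):ℝ) + 1 = (m:ℝ) := by push_cast [Nat.cast_sub hm1]; ring
  have c2 : ((n-m-1:ℕ):ℝ) + 1 = ((n-m:ℕ):ℝ) := by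
    have : (1:ℕ) ≤ n - m := by omega
    push_cast [Nat.cast_sub this]
    ring
  rw [c1, c2]
  ring

lemma tri_zero_of_one_le (x : ℝ) (hx : 1 ≤ |x|) : tri x = 0 :=
  max_eq_right (by linarith)

lemma sample_val (g h : ℝ → ℝ)
    (hgp : IsPosDef g) (hhp : IsPosDef h)
    (hg0 : ∀ x, 0 ≤ g x) (hh0 : ∀ x, 0 ≤ h x)
    (hsum : ∀ x, tri x = g x + h x)
    (n m : ℕ) (hn : 0 < n) (hm : m ≤ n) :
    g ((m:ℝ)/n) = g 0 * (1 - (m:ℝ)/n) := by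
  have hn0 : (0:ℝ) < n := by exact_mod_cast hn
  have hvang : ∀ m' : ℕ, n ≤ m' → g ((m':ℝ)/n) = 0 := by
    intro m' hm'
    have hx : (1:ℝ) ≤ (m':ℝ)/n := by
      rw [le_div_iff₀ hn0]
      have : (n:ℝ) ≤ m' := by exact_mod_cast hm'
      linarith
    have htz : tri ((m':ℝ)/n) = 0 := tri_zero_of_one_le _ (by rw [_root_.abs_of_nonneg (by positivity)]; exact hx)
    have := hsum ((m':ℝ)/n)
    have := hg0 ((m':ℝ)/n)
    have := hh0 ((m':ℝ)/n)
    linarith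
  have hvanh : ∀ m' : ℕ, n ≤ m' → h ((m':ℝ)/n) = 0 := by
    intro m' hm'
    have hx : (1:ℝ) ≤ (m':ℝ)/n := by
      rw [le_div_iff₀ hn0]
      have : (n:ℝ) ≤ m' := by exact_mod_cast hm'
      linarith
    have htz : tri ((m':ℝ)/n) = 0 := tri_zero_of_one_le _ (by rw [_root_.abs_of_nonneg (by positivity)]; exact hx)
    have := hsum ((m':ℝ)/n)
    have := hg0 ((m':ℝ)/n)
    have := hh0 ((m':ℝ)/n)
    linarith
  -- m = 0 case
  rcases Nat.eq_zero_or_pos m with hm0 | hm1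
  · subst hm0
    simp
  rcases eq_or_lt_of_le hm with rfl | hmn
  · have h1 : g ((m:ℝ)/m) = 0 := hvang m le_rfl
    rw [div_self hn0.ne'] at h1 ⊢
    rw [h1]
    ring
  -- main case 1 ≤ m < n
  have hSg : ∀ θ, 0 ≤ Ssum g n θ :=
    fun θ => Ssum_nonneg g n hn θ (posdef_even hgp) (posdef_re hgp) hvang
  have hSh : ∀ θ, 0 ≤ Ssum h n θ :=
    fun θ => Ssum_nonneg h n hn θ (posdef_even hhp) (posdef_re hhp) hvanh
  have hadd : ∀ θ, Ssum tri n θ = Ssum g n θ + Ssum h n θ := by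
    intro θ
    simp only [Ssum, hsum, Finset.sum_add_distrib, add_mul]
    ring
  have hSgz : ∀ k : ℕ, 1 ≤ k → k < n → Ssum g n (2 * Real.pi * k / n) = 0 := by
    intro k h1 h2
    have ht := Ssum_tri_zero n hn k h1 h2
    rw [hadd] at ht
    have := hSg (2 * Real.pi * k / n)
    have := hSh (2 * Real.pi * k / n)
    linarith
  have hDgz : ∀ k : ℕ, k < n → Dsum g n (2 * Real.pi * k / n) = 0 := by
    intro k hk
    rcases Nat.eq_zero_or_pos k with rfl | hk1
    · simp [Dsum]
    · exact Dsum_zero_at_min g n _ hSg (hSgz k hk1 hk)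
  -- E1
  have hE1 : Ssum g n 0 = (n:ℝ) * g 0 := by
    rw [← inversion_R1 g n hn]
    rw [Finset.sum_eq_single_of_mem 0 (Finset.mem_range.mpr hn)]
    · norm_num
    · intro k hk hk0
      exact hSgz k (by omega) (Finset.mem_range.mp hk)
  -- E2
  have hE2 : g ((m:ℝ)/n) + g (((n-m:ℕ):ℝ)/n) = g 0 := by
    have hR2 := inversion_R2 g n m hn hm1 hmn
    rw [Finset.sum_eq_single_of_mem 0 (Finset.mem_range.mpr hn)] at hR2
    · rw [show ((0:ℕ):ℝ) = (0:ℝ) by norm_num] at hR2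
      have : Ssum g n (2 * Real.pi * 0 / n) * Real.cos (2 * Real.pi * m * 0 / n) = Ssum g n 0 := by
        norm_num
      rw [this, hE1] at hR2
      have := mul_left_cancel₀ hn0.ne' hR2
      linarith
    · intro k hk hk0
      rw [hSgz k (by omega) (Finset.mem_range.mp hk), zero_mul]
  -- E3
  have hE3 : (m:ℝ) * g ((m:ℝ)/n) = ((n-m:ℕ):ℝ) * g (((n-m:ℕ):ℝ)/n) := by
    have hR3 := inversion_R3 g n m hn hm1 hmn
    rw [Finset.sum_eq_zero] at hR3
    · have : (0:ℝ) = (n:ℝ)/2 * ((m:ℝ) * g ((m:ℝ)/n) - ((n-m:ℕ):ℝ) * g (((n-m:ℕ):ℝ)/n)) := hR3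
      have hne : (n:ℝ)/2 ≠ 0 := by positivity
      have := (mul_eq_zero.mp this.symm).resolve_left hne
      linarith
    · intro k hk
      rw [hDgz k (Finset.mem_range.mp hk), zero_mul]
  -- solve
  have hcast : ((n-m:ℕ):ℝ) = (n:ℝ) - m := by
    push_cast [Nat.cast_sub hm]
    ring
  rw [hcast] at hE2 hE3
  have hg2 : g (((n:ℝ) - m)/n) = g 0 - g ((m:ℝ)/n) := by linarith
  rw [hg2] at hE3
  have hm0' : (0:ℝ) < m := by exact_mod_cast hm1
  -- m * a = (n - m) * (g0 - a)  =>  n * a = (n-m) * g0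
  have hkey : (n:ℝ) * g ((m:ℝ)/n) = ((n:ℝ) - m) * g 0 := by linear_combination hE3
  apply mul_left_cancel₀ hn0.ne'
  rw [hkey]
  field_simp

end TriExt

open TriExt

theorem triangle_extremal :
    ∀ g h : ℝ → ℝ,
      Continuous g → (∀ x, 0 ≤ g x) → IsPosDef g →
      Continuous h → (∀ x, 0 ≤ h x) → IsPosDef h →
      (∀ x, max (1 - |x|) 0 = g x + h x) →
      ∃ c ∈ Set.Icc (0 : ℝ) 1,
        (∀ x, g x = c * max (1 - |x|) 0) ∧ (∀ x, h x = (1 - c) * max (1 - |x|) 0) := by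
  intro g h hgc hg0 hgp hhc hh0 hhp hsum'
  have hsum : ∀ x, tri x = g x + h x := hsum'
  have htri0 : tri 0 = 1 := by rw [tri_eval 0 le_rfl zero_le_one]; ring
  set c := g 0 with hc
  have hc0 : 0 ≤ c := hg0 0
  have hc1 : c ≤ 1 := by
    have h1 := hsum 0
    have h2 := hh0 0
    rw [htri0] at h1
    linarith
  have hrat : ∀ q : ℚ, g (q:ℝ) = c * tri (q:ℝ) := by
    intro q
    by_cases hq : |(q:ℝ)| < 1
    · set n := q.den with hn
      set m := q.num.natAbs with hm
      have hnpos : 0 < n := q.pos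
      have habs : |(q:ℝ)| = (m:ℝ)/(n:ℝ) := by
        rw [hm, hn, Rat.cast_def, abs_div, Nat.cast_natAbs, Int.cast_abs,
          _root_.abs_of_nonneg (show (0:ℝ) ≤ (q.den:ℝ) by positivity)]
      have hmlt : m ≤ n := by
        by_contra hcon
        push_neg at hcon
        have : (1:ℝ) ≤ (m:ℝ)/(n:ℝ) := by
          rw [le_div_iff₀ (by exact_mod_cast hnpos)]
          have : (n:ℝ) ≤ (m:ℝ) := by exact_mod_cast hcon.le
          linarith
        rw [← habs] at this
        linarith
      have hval := sample_val g h hgp hhp hg0 hh0 hsum n m hnpos hmlt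
      have hgabs : g |(q:ℝ)| = c * tri |(q:ℝ)| := by
        rw [habs, hval, tri_eval _ (by positivity) ?hle]
        case hle =>
          rw [← habs]
          exact hq.le
      have heveng : g (-|(q:ℝ)|) = g |(q:ℝ)| := posdef_even hgp _
      have hevent : tri (-|(q:ℝ)|) = tri |(q:ℝ)| := by
        simp [tri]
      rcases abs_cases (q:ℝ) with ⟨he, _⟩ | ⟨he, _⟩
      · rw [← he]
        exact hgabs
      · have hqe : (q:ℝ) = -|(q:ℝ)| := by rw [he]; ring
        rw [hqe, heveng, hevent]
        exact hgabs
    · push_neg at hq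
      have ht := tri_zero_of_one_le _ hq
      have h1 := hsum (q:ℝ)
      have h2 := hg0 (q:ℝ)
      have h3 := hh0 (q:ℝ)
      rw [ht] at h1 ⊢
      linarith
  have htric : Continuous tri :=
    (continuous_const.sub _root_.continuous_abs).max continuous_const
  have hfun : g = fun x => c * tri x := by
    apply Continuous.ext_on Rat.denseRange_cast hgc (continuous_const.mul htric)
    rintro x ⟨q, rfl⟩
    exact hrat q
  have key : ∀ x, g x = c * tri x := fun x => congrFun hfun x
  refine ⟨c, ⟨hc0, hc1⟩, key, fun x => ?_⟩
  have h1 := hsum x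
  have h2 := key x
  simp only [tri] at h1 h2
  linarith
end

section
/- Let P be a real polynomial and λ > 0 such that f(x) = P(x)e^{−πλx²} is nonnegative, positive definite, and its Fourier transform f̂(ξ) = P̃(ξ)e^{−πξ²/λ} is nonnegative with both P and P̃ strictly positive on ℝ (no real zeroes), and deg P ≥ 1. Then f is not an extremal ray generator of the cone of continuous nonnegative positive definite functions on ℝ. -/
open Complex Polynomial
open scoped ComplexOrder FourierTransform Real

open MeasureTheory Filter Topology in
lemma integrable_poly_gaussian (Q : Polynomial ℝ) {a : ℝ} (ha : 0 < a) :
    MeasureTheory.Integrable (fun x : ℝ => Q.eval x * Real.exp (-(a * x ^ 2))) := by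
  have ha2 : 0 < a / 2 := by linarith
  set u : ℝ → ℝ := fun x => |Q.eval x| * Real.exp (-(a / 2) * x ^ 2) with hu
  have hun : ∀ x, 0 ≤ u x := fun x => mul_nonneg (abs_nonneg _) (Real.exp_pos _).le
  have hucont : Continuous u :=
    (Q.continuous.abs.mul (Real.continuous_exp.comp (by fun_prop)))
  have hulim : Tendsto u (cocompact ℝ) (𝓝 0) := by
    have hle : ∀ x, ‖u x‖ ≤ ∑ i ∈ Finset.range (Q.natDegree + 1),
        |Q.coeff i| * (|x| ^ (i : ℝ) * Real.exp (-(a / 2) * x ^ 2)) := by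
      intro x
      have h1 : |Q.eval x| ≤ ∑ i ∈ Finset.range (Q.natDegree + 1), |Q.coeff i| * |x| ^ i := by
        conv_lhs => rw [Q.eval_eq_sum_range]
        refine (Finset.abs_sum_le_sum_abs _ _).trans ?_
        refine Finset.sum_le_sum fun i _ => ?_
        rw [abs_mul, _root_.abs_pow]
      have h2 : ‖u x‖ = |Q.eval x| * Real.exp (-(a / 2) * x ^ 2) := by
        rw [Real.norm_eq_abs, _root_.abs_of_nonneg (hun x)]
      have h3 : ∑ i ∈ Finset.range (Q.natDegree + 1),
          |Q.coeff i| * (|x| ^ (i : ℝ) * Real.exp (-(a / 2) * x ^ 2)) =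
          (∑ i ∈ Finset.range (Q.natDegree + 1), |Q.coeff i| * |x| ^ i) *
            Real.exp (-(a / 2) * x ^ 2) := by
        rw [Finset.sum_mul]
        refine Finset.sum_congr rfl fun i _ => ?_
        rw [Real.rpow_natCast]; ring
      rw [h2, h3]
      exact mul_le_mul_of_nonneg_right h1 (Real.exp_pos _).le
    have hsum : Tendsto (fun x : ℝ => ∑ i ∈ Finset.range (Q.natDegree + 1),
        |Q.coeff i| * (|x| ^ (i : ℝ) * Real.exp (-(a / 2) * x ^ 2))) (cocompact ℝ) (𝓝 0) := by
      have : Tendsto (fun x : ℝ => ∑ i ∈ Finset.range (Q.natDegree + 1),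
          |Q.coeff i| * (|x| ^ (i : ℝ) * Real.exp (-(a / 2) * x ^ 2))) (cocompact ℝ)
          (𝓝 (∑ i ∈ Finset.range (Q.natDegree + 1), |Q.coeff i| * 0)) := by
        refine tendsto_finset_sum _ fun i _ => Tendsto.const_mul _ ?_
        have := tendsto_rpow_abs_mul_exp_neg_mul_sq_cocompact ha2 (i : ℝ)
        simpa [neg_mul] using this
      simpa using this
    exact squeeze_zero_norm hle hsum
  obtain ⟨M, hM⟩ : ∃ M, ∀ x, u x ≤ M := by
    have h1 : ∀ᶠ x in cocompact ℝ, u x ≤ 1 :=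
      hulim.eventually (eventually_le_nhds (by norm_num : (0:ℝ) < 1))
    obtain ⟨K, hK, hKu⟩ := (hasBasis_cocompact.eventually_iff.1 h1)
    obtain ⟨M0, hM0⟩ := hK.exists_bound_of_continuousOn hucont.continuousOn
    refine ⟨max M0 1, fun x => ?_⟩
    by_cases hx : x ∈ K
    · have := hM0 x hx
      rw [Real.norm_eq_abs, _root_.abs_of_nonneg (hun x)] at this
      exact this.trans (le_max_left _ _)
    · exact (hKu hx).trans (le_max_right _ _)
  refine Integrable.mono' ((integrable_exp_neg_mul_sq ha2).const_mul M)
    (Continuous.aestronglyMeasurable (by fun_prop)) ?_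
  refine Filter.Eventually.of_forall fun x => ?_
  have h4 : ‖Q.eval x * Real.exp (-(a * x ^ 2))‖ = u x * Real.exp (-(a / 2) * x ^ 2) := by
    rw [Real.norm_eq_abs, abs_mul, _root_.abs_of_pos (Real.exp_pos _), hu]
    simp only [mul_assoc, ← Real.exp_add]
    ring_nf
  rw [h4]
  exact mul_le_mul_of_nonneg_right (hM x) (Real.exp_pos _).le

open MeasureTheory Filter Topology in
lemma isPosDef_of_fourier_repr (w W : ℝ → ℝ) (hW0 : ∀ ξ, 0 ≤ W ξ)
    (hWint : MeasureTheory.Integrable W)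
    (hinv : ∀ x : ℝ, (w x : ℂ) =
      ∫ ξ : ℝ, Complex.exp (↑(2 * π * (ξ * x)) * Complex.I) * (W ξ : ℂ)) :
    IsPosDef w := by
  intro n x c
  set e : ℝ → Fin n → ℂ := fun ξ j => Complex.exp (↑(2 * π * (ξ * x j)) * Complex.I) with he_def
  have he : ∀ (ξ : ℝ) (j k : Fin n),
      Complex.exp (↑(2 * π * (ξ * (x j - x k))) * Complex.I)
        = e ξ j * (starRingEnd ℂ) (e ξ k) := by
    intro ξ j k
    rw [he_def]
    simp only
    rw [← Complex.exp_conj, ← Complex.exp_add]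
    congr 1
    rw [map_mul, Complex.conj_ofReal, Complex.conj_I]
    push_cast; ring
  have hker : ∀ t : ℝ, MeasureTheory.Integrable
      (fun ξ : ℝ => Complex.exp (↑(2 * π * (ξ * t)) * Complex.I) * (W ξ : ℂ)) := by
    intro t
    refine MeasureTheory.Integrable.mono' hWint.norm ?_ ?_
    · exact ((Complex.continuous_exp.comp (by fun_prop)).aestronglyMeasurable).mul
        (Complex.continuous_ofReal.comp_aestronglyMeasurable hWint.1)
    · filter_upwards with ξ
      have h1 : ‖Complex.exp (↑(2 * π * (ξ * t)) * Complex.I)‖ = 1 := by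
        rw [Complex.norm_exp]; simp
      rw [norm_mul, h1, one_mul, Complex.norm_real]
  have step1 : (∑ j, ∑ k, c j * (starRingEnd ℂ) (c k) * (w (x j - x k) : ℂ)) =
      ∫ ξ : ℝ, ∑ j, ∑ k, c j * (starRingEnd ℂ) (c k) *
        (Complex.exp (↑(2 * π * (ξ * (x j - x k))) * Complex.I) * (W ξ : ℂ)) := by
    rw [MeasureTheory.integral_finset_sum]
    · refine Finset.sum_congr rfl fun j _ => ?_
      rw [MeasureTheory.integral_finset_sum]
      · refine Finset.sum_congr rfl fun k _ => ?_
        rw [hinv (x j - x k), ← MeasureTheory.integral_const_mul]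
      · exact fun k _ => (hker _).const_mul _
    · exact fun j _ => MeasureTheory.integrable_finset_sum _ fun k _ => (hker _).const_mul _
  have hpt : ∀ ξ : ℝ, (∑ j, ∑ k, c j * (starRingEnd ℂ) (c k) *
        (Complex.exp (↑(2 * π * (ξ * (x j - x k))) * Complex.I) * (W ξ : ℂ)))
      = ((W ξ * Complex.normSq (∑ j, c j * e ξ j) : ℝ) : ℂ) := by
    intro ξ
    have h2 : ((W ξ * Complex.normSq (∑ j, c j * e ξ j) : ℝ) : ℂ)
        = (W ξ : ℂ) * ((∑ j, c j * e ξ j) * (starRingEnd ℂ) (∑ j, c j * e ξ j)) := by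
      rw [Complex.mul_conj]; push_cast; ring
    rw [h2, map_sum, Finset.sum_mul_sum, Finset.mul_sum]
    refine Finset.sum_congr rfl fun j _ => ?_
    rw [Finset.mul_sum]
    refine Finset.sum_congr rfl fun k _ => ?_
    rw [he ξ j k, map_mul]
    ring
  rw [step1]
  have step2 : (∫ ξ : ℝ, ∑ j, ∑ k, c j * (starRingEnd ℂ) (c k) *
      (Complex.exp (↑(2 * π * (ξ * (x j - x k))) * Complex.I) * (W ξ : ℂ)))
      = (((∫ ξ : ℝ, W ξ * Complex.normSq (∑ j, c j * e ξ j)) : ℝ) : ℂ) := by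
    have h5 := MeasureTheory.integral_congr_ae
      (μ := MeasureTheory.volume) (Filter.Eventually.of_forall fun ξ => hpt ξ)
    rw [h5]
    exact integral_ofReal
  rw [step2]
  rw [Complex.zero_le_real]
  exact MeasureTheory.integral_nonneg fun ξ =>
    mul_nonneg (hW0 ξ) (Complex.normSq_nonneg _)

open MeasureTheory Filter Topology in
lemma repr_of_hat (w W : ℝ → ℝ) (hwcont : Continuous w)
    (hwint : MeasureTheory.Integrable w) (hWint : MeasureTheory.Integrable W)
    (hhat : 𝓕 (fun x : ℝ => ((w x : ℝ) : ℂ)) = fun ξ : ℝ => ((W ξ : ℝ) : ℂ)) :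
    ∀ x : ℝ, (w x : ℂ) = ∫ ξ : ℝ, Complex.exp (↑(2 * π * (ξ * x)) * Complex.I) * (W ξ : ℂ) := by
  intro x
  have h1 : 𝓕⁻ (𝓕 (fun x : ℝ => ((w x : ℝ) : ℂ))) = fun x : ℝ => ((w x : ℝ) : ℂ) :=
    Continuous.fourierInv_fourier_eq (Complex.continuous_ofReal.comp hwcont) hwint.ofReal
      (by rw [hhat]; exact hWint.ofReal)
  calc (w x : ℂ) = 𝓕⁻ (𝓕 (fun x : ℝ => ((w x : ℝ) : ℂ))) x := (congrFun h1 x).symm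
    _ = 𝓕⁻ (fun ξ : ℝ => ((W ξ : ℝ) : ℂ)) x := by rw [hhat]
    _ = ∫ ξ : ℝ, Complex.exp (↑(2 * π * (ξ * x)) * Complex.I) * (W ξ : ℂ) := by
        rw [Real.fourierInv_eq']
        refine MeasureTheory.integral_congr_ae (Filter.Eventually.of_forall fun ξ => ?_)
        simp [RCLike.inner_apply, smul_eq_mul]
        left; ring_nf

open MeasureTheory Filter Topology in
lemma fourier_gaussian_scaled (lam : ℝ) (hlam : 0 < lam) (C : ℝ) :
    𝓕 (fun x : ℝ => ((C * Real.exp (-(π * lam * x ^ 2)) : ℝ) : ℂ))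
      = fun ξ : ℝ => ((C / Real.sqrt lam * Real.exp (-(π * ξ ^ 2 / lam)) : ℝ) : ℂ) := by
  have hbC : 0 < (lam : ℂ).re := by simpa using hlam
  have hgauss := fourier_gaussian_pi (b := (lam : ℂ)) hbC
  have hsqrt : ((Real.sqrt lam : ℝ) : ℂ) = (lam : ℂ) ^ (1/2 : ℂ) := by
    rw [Real.sqrt_eq_rpow, Complex.ofReal_cpow hlam.le]; norm_num
  have h1 : (fun x : ℝ => ((C * Real.exp (-(π * lam * x ^ 2)) : ℝ) : ℂ))
      = fun x : ℝ => (C : ℂ) * Complex.exp (-↑π * ↑lam * (x:ℂ) ^ 2) := by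
    funext x; push_cast; ring_nf
  rw [h1]
  funext ξ
  have h2 : 𝓕 (fun x : ℝ => (C:ℂ) * Complex.exp (-↑π * ↑lam * (x:ℂ) ^ 2)) ξ
      = (C:ℂ) * 𝓕 (fun x : ℝ => Complex.exp (-↑π * ↑lam * (x:ℂ) ^ 2)) ξ := by
    rw [Real.fourier_eq, Real.fourier_eq, ← MeasureTheory.integral_const_mul]
    refine MeasureTheory.integral_congr_ae (Filter.Eventually.of_forall fun v => ?_)
    simp only [Circle.smul_def, smul_eq_mul]
    ring
  rw [h2, congrFun hgauss ξ]
  rw [← hsqrt]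
  have hs0 : ((Real.sqrt lam : ℝ) : ℂ) ≠ 0 := by
    simpa using (Real.sqrt_pos.2 hlam).ne'
  have hl0 : ((lam : ℝ) : ℂ) ≠ 0 := by simpa using hlam.ne'
  push_cast
  rw [show (-(↑π * (ξ:ℂ) ^ 2 / ↑lam)) = -↑π / ↑lam * (ξ:ℂ) ^ 2 by ring]
  field_simp

theorem hermite_no_real_zeroes_not_extremal (lam : ℝ) (hlam : 0 < lam)
    (P Ptilde : Polynomial ℝ) (hP_deg : 1 ≤ P.natDegree)
    (hP_pos : ∀ x : ℝ, 0 < P.eval x)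
    (hPt_pos : ∀ ξ : ℝ, 0 < Ptilde.eval ξ)
    (hf_pd : IsPosDef (fun x => P.eval x * Real.exp (-(π * lam * x ^ 2))))
    (hf_hat : ∀ ξ : ℝ,
      𝓕 (fun x : ℝ => ((P.eval x * Real.exp (-(π * lam * x ^ 2)) : ℝ) : ℂ)) ξ =
        ((Ptilde.eval ξ * Real.exp (-(π * ξ ^ 2 / lam)) : ℝ) : ℂ)) :
    ∃ g h : ℝ → ℝ,
      Continuous g ∧ (∀ x, 0 ≤ g x) ∧ IsPosDef g ∧
      Continuous h ∧ (∀ x, 0 ≤ h x) ∧ IsPosDef h ∧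
      (∀ x, P.eval x * Real.exp (-(π * lam * x ^ 2)) = g x + h x) ∧
      ∀ c : ℝ, g ≠ fun x => c * (P.eval x * Real.exp (-(π * lam * x ^ 2))) := by
  have hsl : 0 < Real.sqrt lam := Real.sqrt_pos.2 hlam
  have hpl : 0 < π * lam := mul_pos Real.pi_pos hlam
  have hpdl : 0 < π / lam := div_pos Real.pi_pos hlam
  -- lower bounds
  obtain ⟨x₀, hx₀⟩ := P.exists_forall_norm_le
  obtain ⟨ξ₀, hξ₀⟩ := Ptilde.exists_forall_norm_le
  set ε1 := P.eval x₀ with hε1def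
  set ε2 := Ptilde.eval ξ₀ with hε2def
  have hε1le : ∀ x, ε1 ≤ P.eval x := by
    intro y
    have := hx₀ y
    rwa [Real.norm_eq_abs, Real.norm_eq_abs, _root_.abs_of_pos (hP_pos x₀),
      _root_.abs_of_pos (hP_pos y)] at this
  have hε2le : ∀ ξ, ε2 ≤ Ptilde.eval ξ := by
    intro y
    have := hξ₀ y
    rwa [Real.norm_eq_abs, Real.norm_eq_abs, _root_.abs_of_pos (hPt_pos ξ₀),
      _root_.abs_of_pos (hPt_pos y)] at this
  set C := min ε1 (ε2 * Real.sqrt lam) with hCdef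
  have hC : 0 < C := lt_min (hP_pos x₀) (mul_pos (hPt_pos ξ₀) hsl)
  have hCP : ∀ x, C ≤ P.eval x := fun x => (min_le_left _ _).trans (hε1le x)
  have hCt : ∀ ξ, C / Real.sqrt lam ≤ Ptilde.eval ξ := by
    intro ξ
    refine ((div_le_iff₀ hsl).2 ?_).trans (hε2le ξ)
    exact min_le_right _ _
  -- the two pieces
  set g : ℝ → ℝ := fun x => C * Real.exp (-(π * lam * x ^ 2)) with hgdef
  set h : ℝ → ℝ := fun x => (P.eval x - C) * Real.exp (-(π * lam * x ^ 2)) with hhdef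
  set Wg : ℝ → ℝ := fun ξ => C / Real.sqrt lam * Real.exp (-(π * ξ ^ 2 / lam)) with hWgdef
  set Wh : ℝ → ℝ := fun ξ =>
    (Ptilde.eval ξ - C / Real.sqrt lam) * Real.exp (-(π * ξ ^ 2 / lam)) with hWhdef
  -- integrability
  have hexp_eq : ∀ ξ : ℝ, -(π / lam * ξ ^ 2) = -(π * ξ ^ 2 / lam) := fun ξ => by ring
  have hg_int : MeasureTheory.Integrable g := by
    have := integrable_poly_gaussian (Polynomial.C C) hpl
    simpa [hgdef] using this
  have hf_int : MeasureTheory.Integrable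
      (fun x : ℝ => P.eval x * Real.exp (-(π * lam * x ^ 2))) :=
    integrable_poly_gaussian P hpl
  have hh_int : MeasureTheory.Integrable h := by
    have := integrable_poly_gaussian (P - Polynomial.C C) hpl
    simpa [hhdef] using this
  have hWg_int : MeasureTheory.Integrable Wg := by
    have := integrable_poly_gaussian (Polynomial.C (C / Real.sqrt lam)) hpdl
    simp only [eval_C] at this
    simpa [hWgdef, hexp_eq] using this
  have hWh_int : MeasureTheory.Integrable Wh := by
    have := integrable_poly_gaussian (Ptilde - Polynomial.C (C / Real.sqrt lam)) hpdl
    simp only [eval_sub, eval_C] at this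
    simpa [hWhdef, hexp_eq] using this
  -- Fourier transform of g
  have hFg : 𝓕 (fun x : ℝ => ((g x : ℝ) : ℂ)) = fun ξ : ℝ => ((Wg ξ : ℝ) : ℂ) :=
    fourier_gaussian_scaled lam hlam C
  -- Fourier transform of h
  have hFh : 𝓕 (fun x : ℝ => ((h x : ℝ) : ℂ)) = fun ξ : ℝ => ((Wh ξ : ℝ) : ℂ) := by
    have hfun : (fun x : ℝ => ((h x : ℝ) : ℂ)) + (fun x : ℝ => ((g x : ℝ) : ℂ))
        = fun x : ℝ => ((P.eval x * Real.exp (-(π * lam * x ^ 2)) : ℝ) : ℂ) := by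
      funext x; simp only [Pi.add_apply]; rw [hhdef, hgdef]; push_cast; ring
    have hadd : 𝓕 ((fun x : ℝ => ((h x : ℝ) : ℂ)) + fun x : ℝ => ((g x : ℝ) : ℂ))
        = (fun ξ : ℝ => 𝓕 (fun x : ℝ => ((h x : ℝ) : ℂ)) ξ
            + 𝓕 (fun x : ℝ => ((g x : ℝ) : ℂ)) ξ) :=
      VectorFourier.fourierIntegral_add Real.continuous_fourierChar continuous_inner
        hh_int.ofReal hg_int.ofReal
    have h6 : 𝓕 (fun x : ℝ => ((P.eval x * Real.exp (-(π * lam * x ^ 2)) : ℝ) : ℂ))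
        = fun ξ : ℝ => 𝓕 (fun x : ℝ => ((h x : ℝ) : ℂ)) ξ
            + 𝓕 (fun x : ℝ => ((g x : ℝ) : ℂ)) ξ := by
      rw [← hfun]; exact hadd
    funext ξ
    have h7 := congrFun h6 ξ
    rw [hf_hat ξ, congrFun hFg ξ] at h7
    have h8 : 𝓕 (fun x : ℝ => ((h x : ℝ) : ℂ)) ξ
        = ((Ptilde.eval ξ * Real.exp (-(π * ξ ^ 2 / lam)) : ℝ) : ℂ) - ((Wg ξ : ℝ) : ℂ) := by
      linear_combination -h7
    rw [h8, hWhdef, hWgdef]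
    push_cast; ring
  -- representations
  have hrepr_g := repr_of_hat g Wg (by fun_prop) hg_int hWg_int hFg
  have hrepr_h := repr_of_hat h Wh
    ((P.continuous.sub continuous_const).mul (by fun_prop)) hh_int hWh_int hFh
  have hWg0 : ∀ ξ, 0 ≤ Wg ξ := fun ξ =>
    mul_nonneg (div_nonneg hC.le hsl.le) (Real.exp_pos _).le
  have hWh0 : ∀ ξ, 0 ≤ Wh ξ := fun ξ =>
    mul_nonneg (by linarith [hCt ξ]) (Real.exp_pos _).le
  refine ⟨g, h, by fun_prop, fun x => mul_nonneg hC.le (Real.exp_pos _).le,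
    isPosDef_of_fourier_repr g Wg hWg0 hWg_int hrepr_g,
    (P.continuous.sub continuous_const).mul (by fun_prop),
    fun x => mul_nonneg (by linarith [hCP x]) (Real.exp_pos _).le,
    isPosDef_of_fourier_repr h Wh hWh0 hWh_int hrepr_h,
    fun x => by rw [hgdef, hhdef]; ring, ?_⟩
  -- non-proportionality
  intro c hgc
  have hx : ∀ x : ℝ, C = c * P.eval x := by
    intro x
    have h0 := congrFun hgc x
    rw [hgdef] at h0
    simp only at h0
    rw [← mul_assoc] at h0
    exact mul_right_cancel₀ (Real.exp_pos _).ne' h0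
  have hc0 : c ≠ 0 := by
    rintro rfl
    have := hx 0
    simp at this
    exact hC.ne' this
  have hPf : P = Polynomial.C (C / c) := by
    apply Polynomial.funext
    intro x
    rw [eval_C, eq_div_iff hc0, mul_comm]
    exact (hx x).symm
  rw [hPf] at hP_deg
  simp at hP_deg
end

section
/- Let f : ℝ → ℝ be an even continuous function that is convex and non-increasing on [0,∞) with f(x) → 0 as x → ∞ (a Pólya-type function). Then f can be written as f(x) = ∫₀^∞ (1 − |x|/t)₊ dν(t) for some positive bounded measure ν on (0,∞), and consequently f is nonnegative and positive definite. -/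
set_option linter.unusedSectionVars false
set_option maxHeartbeats 1000000

open Complex MeasureTheory
open scoped ComplexOrder

namespace PolyaAux
open Set Filter MeasureTheory Topology
open scoped ENNReal

lemma triangle_lint {x t : ℝ} (hx : 0 < x) (hxt : x < t) :
    ∫⁻ s in Set.Ioo x t, ENNReal.ofReal (x / s^2) = ENNReal.ofReal (1 - x/t) := by
  have ht0 : 0 < t := hx.trans hxt
  have hderiv : ∀ s ∈ Set.uIcc x t, HasDerivAt (fun u => -(x/u)) (x/s^2) s := by
    intro s hs
    rw [Set.uIcc_of_le hxt.le] at hs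
    have hs0 : 0 < s := lt_of_lt_of_le hx hs.1
    have := ((hasDerivAt_const s x).div (hasDerivAt_id s) hs0.ne').neg
    refine this.congr_deriv ?_
    simp only [id]
    ring
  have hcont : ContinuousOn (fun s : ℝ => x / s^2) (Set.uIcc x t) := by
    apply ContinuousOn.div continuousOn_const (by fun_prop)
    intro s hs
    rw [Set.uIcc_of_le hxt.le] at hs
    have : 0 < s := lt_of_lt_of_le hx hs.1
    positivity
  have hii : IntervalIntegrable (fun s : ℝ => x / s^2) volume x t :=
    hcont.intervalIntegrable
  have hInt : ∫ s in x..t, x / s^2 = 1 - x/t := by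
    rw [intervalIntegral.integral_eq_sub_of_hasDerivAt hderiv hii]
    field_simp
    ring
  have hIntOn : IntegrableOn (fun s : ℝ => x / s^2) (Set.Ioc x t) volume := by
    rwa [intervalIntegrable_iff_integrableOn_Ioc_of_le hxt.le] at hii
  have h1 : ∫⁻ s in Set.Ioo x t, ENNReal.ofReal (x / s^2)
      = ∫⁻ s in Set.Ioc x t, ENNReal.ofReal (x / s^2) := by
    exact setLIntegral_congr Ioo_ae_eq_Ioc
  rw [h1, ← ofReal_integral_eq_lintegral_ofReal hIntOn]
  · rw [← intervalIntegral.integral_of_le hxt.le, hInt]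
  · filter_upwards [ae_restrict_mem measurableSet_Ioc] with s hs
    have hs0 : 0 < s := hx.trans hs.1
    positivity

lemma swap_lemma (ν : Measure ℝ) [IsFiniteMeasure ν] {x : ℝ} (hx : 0 < x) :
    ∫⁻ t in Set.Ioi x, ∫⁻ s in Set.Ioo x t, ENNReal.ofReal (x / s^2) ∂volume ∂ν
      = ∫⁻ s in Set.Ioi x, ENNReal.ofReal (x / s^2) * ν (Set.Ioi s) ∂volume := by
  set u : ℝ → ℝ≥0∞ := fun s => ENNReal.ofReal (x / s^2) with hu
  have humeas : Measurable u := by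
    apply Measurable.ennreal_ofReal
    exact measurable_const.div (measurable_id.pow_const 2)
  have h1 : ∀ t : ℝ, ∫⁻ s in Set.Ioo x t, u s ∂volume = ∫⁻ s, (Set.Ioo x t).indicator u s ∂volume :=
    fun t => (lintegral_indicator measurableSet_Ioo u).symm
  calc ∫⁻ t in Set.Ioi x, ∫⁻ s in Set.Ioo x t, u s ∂volume ∂ν
      = ∫⁻ t in Set.Ioi x, ∫⁻ s, (Set.Ioo x t).indicator u s ∂volume ∂ν :=
        lintegral_congr fun t => h1 t
    _ = ∫⁻ s, ∫⁻ t in Set.Ioi x, (Set.Ioo x t).indicator u s ∂ν ∂volume := by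
        apply lintegral_lintegral_swap
        have hset : MeasurableSet {p : ℝ × ℝ | x < p.2 ∧ p.2 < p.1} :=
          (measurableSet_lt measurable_const measurable_snd).inter
            (measurableSet_lt measurable_snd measurable_fst)
        have heq : (fun p : ℝ × ℝ => (Set.Ioo x p.1).indicator u p.2)
            = Set.indicator {p : ℝ × ℝ | x < p.2 ∧ p.2 < p.1} (fun p => u p.2) := by
          ext p
          unfold Set.indicator
          simp only [Set.mem_Ioo, Set.mem_setOf_eq]
        rw [show (Function.uncurry fun t s => (Set.Ioo x t).indicator u s)
            = fun p : ℝ × ℝ => (Set.Ioo x p.1).indicator u p.2 from rfl, heq]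
        exact ((humeas.comp measurable_snd).indicator hset).aemeasurable
    _ = ∫⁻ s, (Set.Ioi x).indicator (fun s => u s * ν (Set.Ioi s)) s ∂volume := by
        apply lintegral_congr
        intro s
        by_cases hs : x < s
        · rw [Set.indicator_of_mem (Set.mem_Ioi.2 hs)]
          have : ∀ t : ℝ, (Set.Ioo x t).indicator u s = (Set.Ioi s).indicator (fun _ => u s) t := by
            intro t
            by_cases ht : s < t
            · rw [Set.indicator_of_mem (Set.mem_Ioo.2 ⟨hs, ht⟩),
                Set.indicator_of_mem (Set.mem_Ioi.2 ht)]
            · rw [Set.indicator_of_notMem (fun hc => ht (Set.mem_Ioo.1 hc).2),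
                Set.indicator_of_notMem (fun hc => ht (Set.mem_Ioi.1 hc))]
          rw [lintegral_congr this, lintegral_indicator measurableSet_Ioi,
            setLIntegral_const, Measure.restrict_apply measurableSet_Ioi]
          congr 1
          rw [Set.inter_eq_self_of_subset_left (Set.Ioi_subset_Ioi hs.le)]
        · rw [Set.indicator_of_notMem (fun hc => hs (Set.mem_Ioi.1 hc))]
          have : ∀ t : ℝ, (Set.Ioo x t).indicator u s = 0 := by
            intro t
            exact Set.indicator_of_notMem (fun hc => hs (Set.mem_Ioo.1 hc).1) _
          rw [lintegral_congr this]
          simp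
    _ = ∫⁻ s in Set.Ioi x, u s * ν (Set.Ioi s) ∂volume :=
        lintegral_indicator measurableSet_Ioi _


noncomputable def pg (f : ℝ → ℝ) (t : ℝ) : ℝ := sInf (slope f t '' Set.Ioi t)

section
variable {f : ℝ → ℝ}
  (hf_convex : ConvexOn ℝ (Set.Ici 0) f)
include hf_convex

lemma slope_mono_left {a t y : ℝ} (ha : 0 ≤ a) (hat : a < t) (hty : t < y) :
    slope f a t ≤ slope f t y := by
  rw [slope_comm]
  exact hf_convex.slope_mono (le_of_lt (lt_of_le_of_lt ha hat))
    ⟨ha, hat.ne⟩ ⟨le_of_lt (lt_trans (lt_of_le_of_lt ha hat) hty), hty.ne'⟩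
    (le_of_lt (hat.trans hty))

lemma pg_bddBelow {t : ℝ} (ht : 0 < t) : BddBelow (slope f t '' Set.Ioi t) := by
  refine ⟨slope f (t/2) t, ?_⟩
  rintro _ ⟨y, hy, rfl⟩
  exact slope_mono_left hf_convex (by linarith) (by linarith) hy

lemma pg_le_slope {t y : ℝ} (ht : 0 < t) (hy : t < y) : pg f t ≤ slope f t y :=
  csInf_le (pg_bddBelow hf_convex ht) ⟨y, hy, rfl⟩

lemma slope_le_pg {a t : ℝ} (ha : 0 ≤ a) (hat : a < t) : slope f a t ≤ pg f t := by
  refine le_csInf ⟨slope f t (t+1), ⟨t+1, by simp, rfl⟩⟩ ?_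
  rintro _ ⟨y, hy, rfl⟩
  exact slope_mono_left hf_convex ha hat hy

lemma pg_mono {a b : ℝ} (ha : 0 < a) (hab : a ≤ b) : pg f a ≤ pg f b := by
  rcases eq_or_lt_of_le hab with rfl | h
  · exact le_refl _
  · exact (pg_le_slope hf_convex ha h).trans (slope_le_pg hf_convex ha.le h)

lemma pg_hasDeriv {t : ℝ} (ht : 0 < t) : HasDerivWithinAt f (pg f t) (Set.Ioi t) t := by
  rw [hasDerivWithinAt_iff_tendsto_slope, diff_singleton_eq_self (notMem_Ioi.2 le_rfl)]
  refine MonotoneOn.tendsto_nhdsGT ?_ (pg_bddBelow hf_convex ht)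
  intro a ha b hb hab
  rcases eq_or_lt_of_le hab with rfl | h
  · exact le_refl _
  · exact hf_convex.slope_mono ht.le ⟨(ht.trans ha).le, (ne_of_gt ha)⟩
      ⟨(ht.trans hb).le, (ne_of_gt hb)⟩ hab

lemma pg_nonpos (hf_mono : AntitoneOn f (Set.Ici 0)) {t : ℝ} (ht : 0 < t) : pg f t ≤ 0 := by
  refine (pg_le_slope hf_convex ht (lt_add_one t)).trans ?_
  have h := hf_mono (mem_Ici.2 ht.le) (mem_Ici.2 (by linarith : (0:ℝ) ≤ t + 1)) (by linarith)
  rw [slope_def_field, div_nonpos_iff]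
  right
  constructor <;> linarith

lemma tpg_lower {t : ℝ} (ht : 0 < t) : 2 * (f t - f (t/2)) ≤ t * pg f t := by
  have h := slope_le_pg hf_convex (by linarith : (0:ℝ) ≤ t/2) (by linarith : t/2 < t)
  rw [slope_def_field] at h
  have ht2 : t - t/2 = t/2 := by ring
  calc 2 * (f t - f (t/2)) = t * ((f t - f (t/2)) / (t - t/2)) := by
        rw [ht2]; field_simp
    _ ≤ t * pg f t := by
        exact mul_le_mul_of_nonneg_left h ht.le

-- right continuity of pg on Ioi 0
lemma pg_right_cont (hf_cont : Continuous f) {t : ℝ} (ht : 0 < t) :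
    Tendsto (pg f) (𝓝[>] t) (𝓝 (pg f t)) := by
  have hmono : MonotoneOn (pg f) (Set.Ioi t) := fun a ha b hb hab =>
    pg_mono hf_convex (ht.trans ha) hab
  have hbdd : BddBelow (pg f '' Set.Ioi t) :=
    ⟨pg f t, by rintro _ ⟨s, hs, rfl⟩; exact pg_mono hf_convex ht (le_of_lt hs)⟩
  have h := hmono.tendsto_nhdsGT hbdd
  have heq : sInf (pg f '' Set.Ioi t) = pg f t := by
    apply le_antisymm
    · -- L ≤ slope f t y for all y > t
      refine le_csInf ⟨slope f t (t+1), ⟨t+1, by simp, rfl⟩⟩ ?_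
      rintro _ ⟨y, hy, rfl⟩
      -- sInf (pg f '' Ioi t) ≤ slope f t y
      have ht1 : Tendsto (fun s => slope f s y) (𝓝[>] t) (𝓝 (slope f t y)) := by
        have : ContinuousAt (fun s => slope f s y) t := by
          simp only [slope_def_field]
          exact ContinuousAt.div (by fun_prop) (by fun_prop) (by simp [sub_ne_zero]; exact (ne_of_gt hy))
        exact this.continuousWithinAt.tendsto
      refine le_of_tendsto_of_tendsto h ht1 ?_
      filter_upwards [Ioo_mem_nhdsGT_of_mem ⟨le_refl t, hy⟩] with s hs
      exact pg_le_slope hf_convex (ht.trans hs.1) hs.2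
    · refine le_csInf (⟨pg f (t+1), ⟨t+1, by simp, rfl⟩⟩) ?_
      rintro _ ⟨s, hs, rfl⟩
      exact pg_mono hf_convex ht (le_of_lt hs)
  rwa [heq] at h


variable (hf_cont : Continuous f) (hf_mono : AntitoneOn f (Set.Ici 0))
    (hf_lim : Filter.Tendsto f Filter.atTop (nhds 0))

include hf_cont hf_mono in
lemma tpg_zero_right : Tendsto (fun t => t * pg f t) (𝓝[>] (0:ℝ)) (𝓝 0) := by
  have hlow : Tendsto (fun t => 2 * (f t - f (t/2))) (𝓝[>] (0:ℝ)) (𝓝 0) := by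
    have hc : Continuous (fun t : ℝ => 2 * (f t - f (t/2))) := by fun_prop
    have := (hc.tendsto 0).mono_left (nhdsWithin_le_nhds (s := Set.Ioi (0:ℝ)))
    simpa using this
  refine tendsto_of_tendsto_of_tendsto_of_le_of_le' hlow tendsto_const_nhds ?_ ?_
  · filter_upwards [self_mem_nhdsWithin] with t ht
    exact tpg_lower hf_convex ht
  · filter_upwards [self_mem_nhdsWithin] with t ht
    exact mul_nonpos_of_nonneg_of_nonpos (le_of_lt ht) (pg_nonpos hf_convex hf_mono ht)

include hf_mono hf_lim in
lemma tpg_zero_top : Tendsto (fun t => t * pg f t) atTop (𝓝 0) := by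
  have hlow : Tendsto (fun t => 2 * (f t - f (t/2))) atTop (𝓝 0) := by
    have h2 : Tendsto (fun t : ℝ => f (t/2)) atTop (𝓝 0) :=
      hf_lim.comp (tendsto_id.atTop_div_const (by norm_num))
    have := (hf_lim.sub h2).const_mul (2:ℝ)
    simpa using this
  refine tendsto_of_tendsto_of_tendsto_of_le_of_le' hlow tendsto_const_nhds ?_ ?_
  · filter_upwards [eventually_gt_atTop 0] with t ht
    exact tpg_lower hf_convex ht
  · filter_upwards [eventually_gt_atTop 0] with t ht
    exact mul_nonpos_of_nonneg_of_nonpos (le_of_lt ht) (pg_nonpos hf_convex hf_mono ht)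

omit hf_convex in
lemma f_nonneg (hm : AntitoneOn f (Set.Ici 0)) (he : ∀ x, f (-x) = f x)
    (hl : Filter.Tendsto f Filter.atTop (nhds 0)) : ∀ x, 0 ≤ f x := by
  have key : ∀ x, 0 ≤ x → 0 ≤ f x := by
    intro x hx
    refine le_of_tendsto hl ?_
    filter_upwards [eventually_ge_atTop x] with y hy
    exact hm (mem_Ici.2 hx) (mem_Ici.2 (hx.trans hy)) hy
  intro x
  rcases le_total 0 x with hx | hx
  · exact key x hx
  · rw [← he x]; exact key (-x) (by linarith)

/-- derivative version of convexity: f b - f a ≤ pg f b * (b - a) for 0 < a ≤ b -/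
lemma f_sub_le {a b : ℝ} (ha : 0 < a) (hab : a ≤ b) : f b - f a ≤ pg f b * (b - a) := by
  rcases eq_or_lt_of_le hab with rfl | h
  · simp
  · have := slope_le_pg hf_convex ha.le h
    rw [slope_def_field] at this
    rw [div_le_iff₀ (by linarith)] at this
    linarith

noncomputable def Kf (f : ℝ → ℝ) (t : ℝ) : ℝ := t * pg f t - f t + f 0

lemma Kf_mono {a b : ℝ} (ha : 0 < a) (hab : a ≤ b) : Kf f a ≤ Kf f b := by
  have h1 := f_sub_le hf_convex ha hab
  have h2 := pg_mono hf_convex ha hab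
  have : a * (pg f b - pg f a) ≥ 0 := mul_nonneg ha.le (by linarith)
  simp only [Kf]
  nlinarith

include hf_cont hf_mono in
lemma Kf_zero_right : Tendsto (Kf f) (𝓝[>] (0:ℝ)) (𝓝 0) := by
  have h1 := tpg_zero_right hf_convex hf_cont hf_mono
  have h2 : Tendsto (fun t => - f t + f 0) (𝓝[>] (0:ℝ)) (𝓝 0) := by
    have hc : Continuous (fun t : ℝ => - f t + f 0) := by fun_prop
    have := (hc.tendsto 0).mono_left (nhdsWithin_le_nhds (s := Set.Ioi (0:ℝ)))
    simpa using this
  have h3 := h1.add h2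
  have heq : Kf f = fun t => t * pg f t + (- f t + f 0) := by
    funext t; simp [Kf]; ring
  rw [heq]
  simpa using h3

include hf_cont hf_mono in
lemma Kf_nonneg {b : ℝ} (hb : 0 < b) : 0 ≤ Kf f b := by
  refine le_of_tendsto (Kf_zero_right hf_convex hf_cont hf_mono) ?_
  filter_upwards [Ioo_mem_nhdsGT_of_mem ⟨le_refl (0:ℝ), hb⟩] with s hs
  exact Kf_mono hf_convex hs.1 hs.2.le

include hf_mono hf_lim in
lemma Kf_top : Tendsto (Kf f) atTop (𝓝 (f 0)) := by
  have h1 := tpg_zero_top hf_convex hf_mono hf_lim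
  have := (h1.sub hf_lim).add_const (f 0)
  show Tendsto (fun t => t * pg f t - f t + f 0) atTop _
  simpa [Kf] using this

noncomputable def Hf (f : ℝ → ℝ) (t : ℝ) : ℝ := if t ≤ 0 then 0 else Kf f t

include hf_cont hf_mono in
lemma Hf_mono : Monotone (Hf f) := by
  intro a b hab
  unfold Hf
  split_ifs with h1 h2 h2
  · exact le_refl _
  · exact Kf_nonneg hf_convex hf_cont hf_mono (not_le.1 h2)
  · exact absurd (hab.trans h2) (by exact h1)
  · exact Kf_mono hf_convex (not_le.1 h1) hab

include hf_cont hf_mono in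
lemma Hf_right_cont : ∀ x, ContinuousWithinAt (Hf f) (Set.Ici x) x := by
  intro x
  rcases lt_trichotomy x 0 with hx | rfl | hx
  · refine continuousWithinAt_const.congr_of_eventuallyEq (f := fun _ => (0:ℝ)) ?_ (by simp [Hf, hx.le])
    filter_upwards [mem_nhdsWithin_of_mem_nhds (Iio_mem_nhds hx)] with t (ht : t < 0)
    simp [Hf, ht.le]
  · rw [← continuousWithinAt_Ioi_iff_Ici]
    have h0 : Hf f 0 = 0 := by simp [Hf]
    unfold ContinuousWithinAt
    rw [h0]
    refine (Kf_zero_right hf_convex hf_cont hf_mono).congr' ?_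
    filter_upwards [self_mem_nhdsWithin] with t (ht : (0:ℝ) < t)
    simp [Hf, not_le.2 ht]
  · rw [← continuousWithinAt_Ioi_iff_Ici]
    unfold ContinuousWithinAt
    have hx' : Hf f x = Kf f x := by simp [Hf, not_le.2 hx]
    rw [hx']
    have hK : Tendsto (Kf f) (𝓝[>] x) (𝓝 (Kf f x)) := by
      have h1 : Tendsto (fun t => t * pg f t) (𝓝[>] x) (𝓝 (x * pg f x)) :=
        (tendsto_id.mono_left nhdsWithin_le_nhds).mul (pg_right_cont hf_convex hf_cont hx)
      have h2 : Tendsto f (𝓝[>] x) (𝓝 (f x)) :=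
        (hf_cont.tendsto x).mono_left nhdsWithin_le_nhds
      exact (h1.sub h2).add_const (f 0)
    refine hK.congr' ?_
    filter_upwards [self_mem_nhdsWithin] with t (ht : x < t)
    simp [Hf, not_le.2 (hx.trans ht)]

noncomputable def HS (hf_convex : ConvexOn ℝ (Set.Ici 0) f) (hf_cont : Continuous f)
    (hf_mono : AntitoneOn f (Set.Ici 0)) : StieltjesFunction ℝ :=
  ⟨Hf f, Hf_mono hf_convex hf_cont hf_mono, Hf_right_cont hf_convex hf_cont hf_mono⟩

omit hf_convex in
lemma Hf_atBot : Tendsto (Hf f) atBot (𝓝 0) := by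
  refine tendsto_const_nhds.congr' ?_
  filter_upwards [eventually_le_atBot (0:ℝ)] with t ht
  simp [Hf, ht]

include hf_mono hf_lim in
lemma Hf_atTop : Tendsto (Hf f) atTop (𝓝 (f 0)) := by
  refine (Kf_top hf_convex hf_mono hf_lim).congr' ?_
  filter_upwards [eventually_gt_atTop (0:ℝ)] with t ht
  simp [Hf, not_le.2 ht]

include hf_cont hf_mono in
lemma Hf_nonneg (t : ℝ) : 0 ≤ Hf f t := by
  unfold Hf
  split_ifs with h
  · exact le_refl _
  · exact Kf_nonneg hf_convex hf_cont hf_mono (not_le.1 h)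

include hf_mono hf_lim in
lemma Hf_le (he : ∀ x, f (-x) = f x) (t : ℝ) : Hf f t ≤ f 0 := by
  have h0 := f_nonneg hf_mono he hf_lim
  unfold Hf
  split_ifs with h
  · exact h0 0
  · have h1 : t * pg f t ≤ 0 :=
      mul_nonpos_of_nonneg_of_nonpos (le_of_lt (not_le.1 h)) (pg_nonpos hf_convex hf_mono (not_le.1 h))
    have := h0 t
    simp only [Kf]
    linarith

omit hf_convex in
lemma Hf_Kf {t : ℝ} (ht : 0 < t) : Hf f t = Kf f t := by simp [Hf, not_le.2 ht]

lemma nu_Iic0 : (HS hf_convex hf_cont hf_mono).measure (Set.Iic 0) = 0 := by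
  rw [StieltjesFunction.measure_Iic _ (Hf_atBot) 0]
  simp [HS, Hf]

include hf_lim in
lemma nu_univ : (HS hf_convex hf_cont hf_mono).measure Set.univ = ENNReal.ofReal (f 0) := by
  rw [StieltjesFunction.measure_univ _ (Hf_atBot) (Hf_atTop hf_convex hf_mono hf_lim)]
  simp

include hf_lim in
lemma nu_finite : IsFiniteMeasure (HS hf_convex hf_cont hf_mono).measure :=
  StieltjesFunction.isFiniteMeasure _ (Hf_atBot) (Hf_atTop hf_convex hf_mono hf_lim)

include hf_lim in
lemma nu_Ioi (s : ℝ) :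
    (HS hf_convex hf_cont hf_mono).measure (Set.Ioi s) = ENNReal.ofReal (f 0 - Hf f s) := by
  have hfin := nu_finite hf_convex hf_cont hf_mono hf_lim
  have h1 : (HS hf_convex hf_cont hf_mono).measure (Set.Iic s) = ENNReal.ofReal (Hf f s) := by
    rw [StieltjesFunction.measure_Iic _ (Hf_atBot) s]; simp [HS]
  have h2 := measure_compl (μ := (HS hf_convex hf_cont hf_mono).measure)
    (measurableSet_Iic (a := s)) (measure_ne_top _ _)
  rw [compl_Iic] at h2
  rw [h2, h1, nu_univ hf_convex hf_cont hf_mono hf_lim,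
    ← ENNReal.ofReal_sub _ (Hf_nonneg hf_convex hf_cont hf_mono s)]

include hf_cont hf_mono hf_lim in
lemma Hf_measurable : Measurable (Hf f) := (Hf_mono hf_convex hf_cont hf_mono).measurable

-- integrability of the density on (x, ∞)
include hf_cont hf_mono hf_lim in
lemma psi_integrable (he : ∀ x, f (-x) = f x) {x : ℝ} (hx : 0 < x) :
    IntegrableOn (fun s => x / s^2 * (f 0 - Hf f s)) (Set.Ioi x) volume := by
  have hmeas : Measurable (fun s : ℝ => x / s^2 * (f 0 - Hf f s)) := by
    exact (measurable_const.div (measurable_id.pow_const 2)).mul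
      (measurable_const.sub (Hf_measurable hf_convex hf_cont hf_mono hf_lim))
  have hdom : IntegrableOn (fun s : ℝ => (x * f 0) * s ^ (-2 : ℝ)) (Set.Ioi x) volume :=
    (integrableOn_Ioi_rpow_of_lt (by norm_num) hx).const_mul _
  refine hdom.mono' (hmeas.aestronglyMeasurable.restrict) ?_
  filter_upwards [ae_restrict_mem measurableSet_Ioi] with s (hs : x < s)
  have hs0 : 0 < s := hx.trans hs
  have h1 : 0 ≤ f 0 - Hf f s := sub_nonneg.2 (Hf_le hf_convex hf_mono hf_lim he s)
  have h2 : f 0 - Hf f s ≤ f 0 := by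
    have := Hf_nonneg hf_convex hf_cont hf_mono s; linarith
  have h3 : (0:ℝ) < s ^ 2 := by positivity
  rw [Real.norm_eq_abs, _root_.abs_of_nonneg (by positivity), Real.rpow_neg hs0.le]
  have : s ^ (2:ℝ) = s ^ 2 := by
    rw [← Real.rpow_natCast s 2]; norm_num
  rw [this]
  rw [div_mul_eq_mul_div, div_le_iff₀ h3, mul_assoc, inv_mul_cancel₀ h3.ne', mul_one]
  have := mul_le_mul_of_nonneg_left h2 hx.le
  linarith


include hf_cont hf_mono hf_lim in
lemma ftc_step (he : ∀ x, f (-x) = f x) {x b : ℝ} (hx : 0 < x) (hxb : x ≤ b) :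
    ∫ s in x..b, x / s^2 * (f 0 - Hf f s) = f x - x * f b / b := by
  have key : ∫ s in x..b, x / s^2 * (f 0 - Hf f s)
      = (-(x * f b) / b) - (-(x * f x) / x) := by
    apply intervalIntegral.integral_eq_sub_of_hasDeriv_right_of_le hxb
    · -- continuity of G on Icc x b
      apply ContinuousOn.div (by fun_prop) continuousOn_id
      intro s hs
      have : 0 < s := lt_of_lt_of_le hx hs.1
      exact this.ne'
    · intro s hs
      have hs0 : 0 < s := hx.trans hs.1
      have hc : HasDerivWithinAt (fun s => -(x * f s)) (-(x * pg f s)) (Set.Ioi s) s :=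
        ((pg_hasDeriv hf_convex hs0).const_mul x).neg
      have hd : HasDerivWithinAt (fun s : ℝ => s) 1 (Set.Ioi s) s := hasDerivWithinAt_id s _
      have := hc.div hd hs0.ne'
      refine this.congr_deriv ?_
      have hH : f 0 - Hf f s = f s - s * pg f s := by
        rw [Hf_Kf hs0]; simp [Kf]
      rw [hH]
      field_simp
      ring
    · rw [intervalIntegrable_iff_integrableOn_Ioc_of_le hxb]
      exact (psi_integrable hf_convex hf_cont hf_mono hf_lim he hx).mono_set Set.Ioc_subset_Ioi_self
  rw [key]
  field_simp
  ring

include hf_cont hf_mono hf_lim in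
lemma integral_psi_Ioi (he : ∀ x, f (-x) = f x) {x : ℝ} (hx : 0 < x) :
    ∫ s in Set.Ioi x, x / s^2 * (f 0 - Hf f s) = f x := by
  have hint := psi_integrable hf_convex hf_cont hf_mono hf_lim he hx
  have h1 := MeasureTheory.intervalIntegral_tendsto_integral_Ioi x hint tendsto_id
  have h2 : Tendsto (fun b => f x - x * f b / b) atTop (𝓝 (f x)) := by
    have : Tendsto (fun b => x * f b / b) atTop (𝓝 0) := by
      have hb : Tendsto (fun b : ℝ => f b * b⁻¹) atTop (𝓝 (0 * 0)) :=
        hf_lim.mul tendsto_inv_atTop_zero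
      have : Tendsto (fun b : ℝ => x * (f b * b⁻¹)) atTop (𝓝 (x * (0 * 0))) :=
        hb.const_mul x
      simpa [mul_div_assoc, div_eq_mul_inv, mul_assoc] using this
    simpa using tendsto_const_nhds.sub this
  have h3 : (fun b => ∫ s in x..b, x / s^2 * (f 0 - Hf f s)) =ᶠ[atTop]
      (fun b => f x - x * f b / b) := by
    filter_upwards [eventually_ge_atTop x] with b hb
    exact ftc_step hf_convex hf_cont hf_mono hf_lim he hx hb
  exact tendsto_nhds_unique (h1.congr' h3) h2

include hf_cont hf_mono hf_lim in
lemma lint_rep (he : ∀ x, f (-x) = f x) {x : ℝ} (hx : 0 < x) :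
    ∫⁻ t, ENNReal.ofReal (max (1 - x/t) 0) ∂((HS hf_convex hf_cont hf_mono).measure)
      = ENNReal.ofReal (f x) := by
  set ν := (HS hf_convex hf_cont hf_mono).measure with hν
  have hfin : IsFiniteMeasure ν := nu_finite hf_convex hf_cont hf_mono hf_lim
  have h0 : ν (Set.Iic 0) = 0 := nu_Iic0 hf_convex hf_cont hf_mono
  have hres : ν.restrict (Set.Ioi 0) = ν := by
    apply Measure.restrict_eq_self_of_ae_mem
    rw [ae_iff]
    convert h0 using 2
    ext t; simp [not_lt]
  have hsplit : Set.Ioc 0 x ∪ Set.Ioi x = Set.Ioi (0:ℝ) := Set.Ioc_union_Ioi_eq_Ioi hx.le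
  calc ∫⁻ t, ENNReal.ofReal (max (1 - x/t) 0) ∂ν
      = ∫⁻ t in Set.Ioi 0, ENNReal.ofReal (max (1 - x/t) 0) ∂ν := by rw [hres]
    _ = ∫⁻ t in Set.Ioc 0 x, ENNReal.ofReal (max (1 - x/t) 0) ∂ν
        + ∫⁻ t in Set.Ioi x, ENNReal.ofReal (max (1 - x/t) 0) ∂ν := by
        rw [← hsplit, lintegral_union measurableSet_Ioi (Set.Ioc_disjoint_Ioi le_rfl)]
    _ = 0 + ∫⁻ t in Set.Ioi x, ENNReal.ofReal (max (1 - x/t) 0) ∂ν := by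
        congr 1
        have : ∫⁻ t in Set.Ioc 0 x, ENNReal.ofReal (max (1 - x/t) 0) ∂ν
            = ∫⁻ t in Set.Ioc 0 x, 0 ∂ν := by
          apply setLIntegral_congr_fun measurableSet_Ioc
          intro t ht
          beta_reduce
          have h1 : (1:ℝ) ≤ x / t := (one_le_div ht.1).2 ht.2
          rw [max_eq_right (by linarith), ENNReal.ofReal_zero]
        rw [this, lintegral_zero]
    _ = ∫⁻ t in Set.Ioi x, ENNReal.ofReal (1 - x/t) ∂ν := by
        rw [zero_add]
        apply setLIntegral_congr_fun measurableSet_Ioi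
        intro t ht
        beta_reduce
        have ht0 : 0 < t := hx.trans ht
        have h1 : x / t ≤ 1 := (div_le_one ht0).2 (le_of_lt ht)
        rw [max_eq_left (by linarith)]
    _ = ∫⁻ t in Set.Ioi x, ∫⁻ s in Set.Ioo x t, ENNReal.ofReal (x/s^2) ∂volume ∂ν := by
        apply setLIntegral_congr_fun measurableSet_Ioi
        intro t ht
        beta_reduce
        exact (triangle_lint hx ht).symm
    _ = ∫⁻ s in Set.Ioi x, ENNReal.ofReal (x/s^2) * ν (Set.Ioi s) ∂volume := swap_lemma ν hx
    _ = ∫⁻ s in Set.Ioi x, ENNReal.ofReal (x/s^2 * (f 0 - Hf f s)) ∂volume := by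
        apply setLIntegral_congr_fun measurableSet_Ioi
        intro s hs
        beta_reduce
        have hs0 : 0 < s := hx.trans hs
        rw [hν, nu_Ioi hf_convex hf_cont hf_mono hf_lim s,
          ENNReal.ofReal_mul (by positivity : (0:ℝ) ≤ x / s^2)]
    _ = ENNReal.ofReal (∫ s in Set.Ioi x, x/s^2 * (f 0 - Hf f s)) := by
        rw [← ofReal_integral_eq_lintegral_ofReal
          (psi_integrable hf_convex hf_cont hf_mono hf_lim he hx)]
        filter_upwards [ae_restrict_mem measurableSet_Ioi] with s (hs : x < s)
        have hs0 : 0 < s := hx.trans hs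
        have h1 : 0 ≤ f 0 - Hf f s := sub_nonneg.2 (Hf_le hf_convex hf_mono hf_lim he s)
        positivity
    _ = ENNReal.ofReal (f x) := by
        rw [integral_psi_Ioi hf_convex hf_cont hf_mono hf_lim he hx]

include hf_cont hf_mono hf_lim in
lemma rep (he : ∀ x, f (-x) = f x) (x : ℝ) :
    f x = ∫ t, max (1 - |x| / t) 0 ∂((HS hf_convex hf_cont hf_mono).measure) := by
  set ν := (HS hf_convex hf_cont hf_mono).measure with hν
  have hfin : IsFiniteMeasure ν := nu_finite hf_convex hf_cont hf_mono hf_lim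
  have hf0 : 0 ≤ f 0 := f_nonneg hf_mono he hf_lim 0
  have hfx : f |x| = f x := by
    rcases abs_cases x with ⟨h, _⟩ | ⟨h, _⟩
    · rw [h]
    · rw [h, he]
  rcases eq_or_lt_of_le (abs_nonneg x) with h0 | hpos
  · rw [← h0] at hfx ⊢
    rw [← hfx]
    have : ∀ t : ℝ, max (1 - (0:ℝ)/t) 0 = 1 := by
      intro t; rw [zero_div]; norm_num
    simp only [this]
    rw [integral_const, smul_eq_mul, mul_one, measureReal_def, hν,
      nu_univ hf_convex hf_cont hf_mono hf_lim, ENNReal.toReal_ofReal hf0]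
  · have key := lint_rep hf_convex hf_cont hf_mono hf_lim he hpos
    have hmeas : Measurable (fun t : ℝ => max (1 - |x| / t) 0) :=
      (measurable_const.sub (measurable_const.div measurable_id)).max measurable_const
    have hb := integral_eq_lintegral_of_nonneg_ae (μ := ν) (f := fun t => max (1 - |x| / t) 0)
      (ae_of_all _ fun t => le_max_right _ _) hmeas.aestronglyMeasurable
    rw [← hν] at key
    rw [hb, key, ENNReal.toReal_ofReal (f_nonneg hf_mono he hf_lim _), hfx]


end


-- overlap of two unit-indicator intervals gives the triangle kernel
lemma overlap_integral {t : ℝ} (ht : 0 < t) (a b : ℝ) :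
    ∫ s, (Set.Icc a (a+t)).indicator (fun _ => (1:ℝ)) s
        * (Set.Icc b (b+t)).indicator (fun _ => (1:ℝ)) s
      = t * max (1 - |a-b|/t) 0 := by
  have h1 : (fun s => (Set.Icc a (a+t)).indicator (fun _ => (1:ℝ)) s
      * (Set.Icc b (b+t)).indicator (fun _ => (1:ℝ)) s)
      = (Set.Icc a (a+t) ∩ Set.Icc b (b+t)).indicator (fun _ => (1:ℝ)) := by
    ext s
    rw [← Set.inter_indicator_mul]
    simp
  rw [h1, integral_indicator_const _ ((measurableSet_Icc).inter measurableSet_Icc)]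
  rw [Set.Icc_inter_Icc, smul_eq_mul, mul_one]
  rw [measureReal_def, Real.volume_Icc]
  have htoReal : ∀ r : ℝ, (ENNReal.ofReal r).toReal = max r 0 := by
    intro r
    rcases le_total 0 r with h | h
    · rw [ENNReal.toReal_ofReal h, max_eq_left h]
    · rw [ENNReal.ofReal_eq_zero.2 h, ENNReal.toReal_zero, max_eq_right h]
  rw [htoReal]
  have hmm : min (a+t) (b+t) - max a b = t - |a - b| := by
    rcases le_total a b with h | h
    · rw [min_add_add_right, min_eq_left h, max_eq_right h, _root_.abs_of_nonpos (by linarith)]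
      ring
    · rw [min_add_add_right, min_eq_right h, max_eq_left h, _root_.abs_of_nonneg (by linarith : (0:ℝ) ≤ a - b)]
      ring
  rw [hmm]
  rw [mul_max_of_nonneg _ _ ht.le, mul_zero]
  congr 1
  field_simp

lemma triangle_posdef {t : ℝ} (ht : 0 < t) (n : ℕ) (x : Fin n → ℝ) (c : Fin n → ℂ) :
    0 ≤ ∑ j, ∑ k, (c j * (starRingEnd ℂ) (c k)).re * max (1 - |x j - x k| / t) 0 := by
  set e : Fin n → ℝ → ℝ := fun j => (Set.Icc (x j) (x j + t)).indicator (fun _ => (1:ℝ)) with he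
  set F : ℝ → ℂ := fun s => ∑ j, c j * (e j s : ℂ) with hF
  have heint : ∀ j k : Fin n, Integrable (fun s => (c j * (starRingEnd ℂ) (c k)).re
      * (e j s * e k s)) volume := by
    intro j k
    have h1 : (fun s => e j s * e k s)
        = (Set.Icc (x j) (x j + t) ∩ Set.Icc (x k) (x k + t)).indicator (fun _ => (1:ℝ)) := by
      ext s
      rw [he, ← Set.inter_indicator_mul]
      simp
    have h2 : Integrable (fun s => e j s * e k s) volume := by
      rw [h1]
      rw [integrable_indicator_iff (measurableSet_Icc.inter measurableSet_Icc)]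
      exact integrableOn_const (lt_of_le_of_lt
        (measure_mono Set.inter_subset_left) measure_Icc_lt_top).ne
    exact h2.const_mul _
  have hnormsq : ∀ s, ‖F s‖^2 = ∑ j, ∑ k, (c j * (starRingEnd ℂ) (c k)).re * (e j s * e k s) := by
    intro s
    have h1 : F s * (starRingEnd ℂ) (F s)
        = ∑ j, ∑ k, (c j * (starRingEnd ℂ) (c k)) * ((e j s * e k s : ℝ) : ℂ) := by
      rw [hF, map_sum, Finset.sum_mul_sum]
      apply Finset.sum_congr rfl
      intro j _
      apply Finset.sum_congr rfl
      intro k _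
      rw [map_mul, Complex.conj_ofReal]
      push_cast
      ring
    have h2 : (F s * (starRingEnd ℂ) (F s)).re = ‖F s‖^2 := by
      rw [Complex.mul_conj]
      simp [Complex.normSq_eq_norm_sq, ← Complex.ofReal_pow]
    rw [← h2, h1]
    rw [Complex.re_sum]
    apply Finset.sum_congr rfl
    intro j _
    rw [Complex.re_sum]
    apply Finset.sum_congr rfl
    intro k _
    simp [Complex.mul_re]
  have hkey : ∑ j, ∑ k, (c j * (starRingEnd ℂ) (c k)).re * (t * max (1 - |x j - x k| / t) 0)
      = ∫ s, ‖F s‖^2 := by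
    have : ∀ (j k : Fin n), ∫ s, (c j * (starRingEnd ℂ) (c k)).re * (e j s * e k s)
        = (c j * (starRingEnd ℂ) (c k)).re * (t * max (1 - |x j - x k| / t) 0) := by
      intro j k
      rw [integral_const_mul, overlap_integral ht]
    calc ∑ j, ∑ k, (c j * (starRingEnd ℂ) (c k)).re * (t * max (1 - |x j - x k| / t) 0)
        = ∑ j, ∑ k, ∫ s, (c j * (starRingEnd ℂ) (c k)).re * (e j s * e k s) := by
          apply Finset.sum_congr rfl; intro j _
          apply Finset.sum_congr rfl; intro k _
          exact (this j k).symm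
      _ = ∫ s, ∑ j, ∑ k, (c j * (starRingEnd ℂ) (c k)).re * (e j s * e k s) := by
          rw [integral_finset_sum]
          · apply Finset.sum_congr rfl; intro j _
            rw [integral_finset_sum]
            intro k _
            exact heint j k
          · intro j _
            exact integrable_finset_sum _ (fun k _ => heint j k)
      _ = ∫ s, ‖F s‖^2 := by
          apply integral_congr_ae
          apply ae_of_all
          intro s
          exact (hnormsq s).symm
  have hpos : 0 ≤ ∫ s, ‖F s‖^2 := integral_nonneg (fun s => sq_nonneg _)
  rw [← hkey] at hpos
  have hfact : ∑ j, ∑ k, (c j * (starRingEnd ℂ) (c k)).re * (t * max (1 - |x j - x k| / t) 0)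
      = t * ∑ j, ∑ k, (c j * (starRingEnd ℂ) (c k)).re * max (1 - |x j - x k| / t) 0 := by
    rw [Finset.mul_sum]
    apply Finset.sum_congr rfl; intro j _
    rw [Finset.mul_sum]
    apply Finset.sum_congr rfl; intro k _
    ring
  rw [hfact] at hpos
  nlinarith [hpos]


lemma posdef_of_rep (f : ℝ → ℝ) (ν : Measure ℝ) [IsFiniteMeasure ν]
    (hν0 : ν (Set.Iic 0) = 0)
    (hrep : ∀ u, f u = ∫ t, max (1 - |u| / t) 0 ∂ν) (he : ∀ u, f (-u) = f u) :
    IsPosDef f := by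
  intro n x c
  have hae : ∀ᵐ t ∂ν, 0 < t := by
    rw [ae_iff]
    convert hν0 using 2
    ext t; simp [not_lt]
  have hTint : ∀ u : ℝ, Integrable (fun t => max (1 - |u|/t) 0) ν := by
    intro u
    refine Integrable.mono' (integrable_const 1) ?_ ?_
    · exact ((measurable_const.sub (measurable_const.div measurable_id)).max
        measurable_const).aestronglyMeasurable
    · filter_upwards [hae] with t ht
      rw [Real.norm_eq_abs, _root_.abs_of_nonneg (le_max_right _ _)]
      apply max_le _ zero_le_one
      have h1 : 0 ≤ |u|/t := by positivity
      linarith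
  rw [Complex.le_def]
  constructor
  · rw [Complex.zero_re, Complex.re_sum]
    have hre : ∀ j : Fin n, (∑ k, c j * (starRingEnd ℂ) (c k) * (f (x j - x k) : ℂ)).re
        = ∑ k, (c j * (starRingEnd ℂ) (c k)).re * f (x j - x k) := by
      intro j
      rw [Complex.re_sum]
      apply Finset.sum_congr rfl
      intro k _
      simp [Complex.mul_re]
    rw [Finset.sum_congr rfl (fun j _ => hre j)]
    have hswap : ∑ j, ∑ k, (c j * (starRingEnd ℂ) (c k)).re * f (x j - x k)
        = ∫ t, ∑ j, ∑ k, (c j * (starRingEnd ℂ) (c k)).re * max (1 - |x j - x k|/t) 0 ∂ν := by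
      rw [integral_finset_sum _ (fun j _ => integrable_finset_sum _
        (fun k _ => (hTint _).const_mul _))]
      apply Finset.sum_congr rfl
      intro j _
      rw [integral_finset_sum _ (fun k _ => (hTint _).const_mul _)]
      apply Finset.sum_congr rfl
      intro k _
      rw [hrep (x j - x k), ← integral_const_mul]
    rw [hswap]
    apply integral_nonneg_of_ae
    filter_upwards [hae] with t ht
    exact triangle_posdef ht n x c
  · rw [Complex.zero_im, Complex.im_sum]
    have him : ∀ j : Fin n, (∑ k, c j * (starRingEnd ℂ) (c k) * (f (x j - x k) : ℂ)).im
        = ∑ k, (c j * (starRingEnd ℂ) (c k)).im * f (x j - x k) := by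
      intro j
      rw [Complex.im_sum]
      apply Finset.sum_congr rfl
      intro k _
      simp [Complex.mul_im]
    rw [Finset.sum_congr rfl (fun j _ => him j)]
    set A : Fin n → Fin n → ℝ := fun j k => (c j * (starRingEnd ℂ) (c k)).im * f (x j - x k)
      with hA
    have hanti : ∀ j k, A k j = -A j k := by
      intro j k
      rw [hA]
      simp only
      have h1 : f (x k - x j) = f (x j - x k) := by
        rw [← he (x j - x k)]; congr 1; ring
      rw [h1]
      have h2 : (c k * (starRingEnd ℂ) (c j)).im = -(c j * (starRingEnd ℂ) (c k)).im := by
        simp [Complex.mul_im]; ring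
      rw [h2]; ring
    have hzero : ∑ j, ∑ k, A j k = 0 := by
      have h1 : ∑ j, ∑ k, A j k = ∑ k, ∑ j, A j k := Finset.sum_comm
      have h2 : ∑ k, ∑ j : Fin n, A j k = -∑ k, ∑ j : Fin n, A k j := by
        rw [← Finset.sum_neg_distrib]
        apply Finset.sum_congr rfl
        intro k _
        rw [← Finset.sum_neg_distrib]
        apply Finset.sum_congr rfl
        intro j _
        rw [hanti k j]
      rw [h2] at h1
      linarith
    exact hzero.symm


end PolyaAux

theorem polya_criterion (f : ℝ → ℝ)
    (hf_cont : Continuous f) (hf_even : ∀ x, f (-x) = f x)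
    (hf_convex : ConvexOn ℝ (Set.Ici 0) f)
    (hf_mono : AntitoneOn f (Set.Ici 0))
    (hf_lim : Filter.Tendsto f Filter.atTop (nhds 0)) :
    (∃ ν : Measure ℝ, IsFiniteMeasure ν ∧ ν (Set.Iic 0) = 0 ∧
      ∀ x, f x = ∫ t, max (1 - |x| / t) 0 ∂ν) ∧
    (∀ x, 0 ≤ f x) ∧ IsPosDef f := by
  haveI := PolyaAux.nu_finite hf_convex hf_cont hf_mono hf_lim
  refine ⟨⟨(PolyaAux.HS hf_convex hf_cont hf_mono).measure,
    PolyaAux.nu_finite hf_convex hf_cont hf_mono hf_lim,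
    PolyaAux.nu_Iic0 hf_convex hf_cont hf_mono,
    PolyaAux.rep hf_convex hf_cont hf_mono hf_lim hf_even⟩,
    PolyaAux.f_nonneg hf_mono hf_even hf_lim, ?_⟩
  exact PolyaAux.posdef_of_rep f (PolyaAux.HS hf_convex hf_cont hf_mono).measure
    (PolyaAux.nu_Iic0 hf_convex hf_cont hf_mono)
    (PolyaAux.rep hf_convex hf_cont hf_mono hf_lim hf_even) hf_even
end
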